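/- arXiv:1903.00094 — 4 statements merged into one kernel-verified Lean document; each statement's English description precedes it below -/
import Mathlib

section
/- Let φ : [0,∞) → [0,∞) be continuously differentiable and suppose there exist r₀ > 0 and a non-increasing function Φ : (r₀,∞) → [0,∞) with φ(r) ≥ Φ(r) for all r > r₀ and ∫_{r₀}^∞ Φ(r) dr = ∞. Then any global solution (x_i, v_i)_{i=1}^N of the Cucker–Smale system on ℝ^d defined for all t ≥ 0 aligns in the fourth-order variation: V₄(t) → 0 as t → ∞. -/
open MeasureTheory Filter
open scoped RealInnerProductSpace

section auxlemmas
variable {H : Type*} [NormedAddCommGroup H] [InnerProductSpace ℝ H] {N : ℕ}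

lemma cs_sum_antisym (c : Fin N → Fin N → ℝ) (hc : ∀ i k, c i k = c k i)
    (v : Fin N → H) : ∑ i, ∑ k, c i k • (v k - v i) = 0 := by
  have h2 : ∑ i, ∑ k, c i k • (v k - v i) = -∑ i, ∑ k, c i k • (v k - v i) := by
    calc ∑ i, ∑ k, c i k • (v k - v i) = ∑ k, ∑ i, c i k • (v k - v i) := Finset.sum_comm
      _ = ∑ i, ∑ k, c k i • (v i - v k) := rfl
      _ = -∑ i, ∑ k, c i k • (v k - v i) := by
          rw [← Finset.sum_neg_distrib]
          refine Finset.sum_congr rfl fun i _ => ?_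
          rw [← Finset.sum_neg_distrib]
          refine Finset.sum_congr rfl fun k _ => ?_
          rw [hc k i, ← smul_neg, neg_sub]
  have h3 : (2:ℝ) • ∑ i, ∑ k, c i k • (v k - v i) = 0 := by
    rw [two_smul]; nth_rewrite 2 [h2]; simp
  rcases smul_eq_zero.1 h3 with h | h
  · norm_num at h
  · exact h

lemma cs_two_s (c : Fin N → Fin N → ℝ) (hc : ∀ i k, c i k = c k i) (y v : Fin N → H) :
    2 * ∑ i, ∑ k, c i k * ⟪y i, v k - v i⟫ =
      -∑ i, ∑ k, c i k * ⟪y i - y k, v i - v k⟫ := by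
  have hswap : ∑ i, ∑ k, c i k * ⟪y i, v k - v i⟫
      = ∑ i, ∑ k, c i k * ⟪y k, v i - v k⟫ := by
    calc ∑ i, ∑ k, c i k * ⟪y i, v k - v i⟫
        = ∑ k, ∑ i, c i k * ⟪y i, v k - v i⟫ := Finset.sum_comm
      _ = ∑ i, ∑ k, c k i * ⟪y k, v i - v k⟫ := rfl
      _ = ∑ i, ∑ k, c i k * ⟪y k, v i - v k⟫ := by
          refine Finset.sum_congr rfl fun i _ => Finset.sum_congr rfl fun k _ => by rw [hc k i]
  rw [two_mul]
  nth_rewrite 2 [hswap]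
  rw [← Finset.sum_add_distrib, ← Finset.sum_neg_distrib]
  refine Finset.sum_congr rfl fun i _ => ?_
  rw [← Finset.sum_add_distrib, ← Finset.sum_neg_distrib]
  refine Finset.sum_congr rfl fun k _ => ?_
  have e1 : ⟪y i, v k - v i⟫ = ⟪y i, v k⟫ - ⟪y i, v i⟫ := inner_sub_right _ _ _
  have e2 : ⟪y k, v i - v k⟫ = ⟪y k, v i⟫ - ⟪y k, v k⟫ := inner_sub_right _ _ _
  have e3 : ⟪y i - y k, v i - v k⟫
      = ⟪y i, v i⟫ - ⟪y i, v k⟫ - (⟪y k, v i⟫ - ⟪y k, v k⟫) := by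
    rw [inner_sub_left, inner_sub_right, inner_sub_right]
  rw [e1, e2, e3]; ring

lemma cs_main_identity (c : Fin N → Fin N → ℝ) (hc : ∀ i k, c i k = c k i) (y v : Fin N → H) :
    ∑ i, ∑ j, ⟪y i - y j,
        (∑ k, c i k • (v k - v i)) - (∑ k, c j k • (v k - v j))⟫
      = -(N : ℝ) * ∑ i, ∑ k, c i k * ⟪y i - y k, v i - v k⟫ := by
  set A : Fin N → H := fun i => ∑ k, c i k • (v k - v i) with hA
  have hsplit : ∀ i j : Fin N, ⟪y i - y j, A i - A j⟫ = ⟪y i - y j, A i⟫ - ⟪y i - y j, A j⟫ :=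
    fun i j => inner_sub_right _ _ _
  have hS2 : ∑ i, ∑ j, ⟪y i - y j, A j⟫ = -∑ i, ∑ j, ⟪y i - y j, A i⟫ := by
    calc ∑ i, ∑ j, ⟪y i - y j, A j⟫ = ∑ j, ∑ i, ⟪y i - y j, A j⟫ := Finset.sum_comm
      _ = ∑ i, ∑ j, ⟪y j - y i, A i⟫ := rfl
      _ = -∑ i, ∑ j, ⟪y i - y j, A i⟫ := by
          rw [← Finset.sum_neg_distrib]
          refine Finset.sum_congr rfl fun i _ => ?_
          rw [← Finset.sum_neg_distrib]
          exact Finset.sum_congr rfl fun j _ => by rw [← inner_neg_left, neg_sub]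
  have key : ∑ i, ∑ j, ⟪y i - y j, A i - A j⟫ = 2 * ∑ i, ∑ j, ⟪y i - y j, A i⟫ := by
    simp only [hsplit, Finset.sum_sub_distrib]
    rw [hS2]; ring
  -- now compute ∑ij ⟪y i - y j, A i⟫
  have hrow : ∀ i : Fin N, ∑ j, ⟪y i - y j, A i⟫ = ⟪(N : ℝ) • y i - ∑ j, y j, A i⟫ := by
    intro i
    rw [← sum_inner]
    congr 1
    rw [Finset.sum_sub_distrib, Finset.sum_const, Finset.card_univ, Fintype.card_fin]
    simp [Nat.cast_smul_eq_nsmul ℝ]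
  have hAzero : ∑ i, A i = 0 := cs_sum_antisym c hc v
  have hS1 : ∑ i, ∑ j, ⟪y i - y j, A i⟫
      = (N : ℝ) * ∑ i, ⟪y i, A i⟫ - ⟪∑ j, y j, ∑ i, A i⟫ := by
    simp only [hrow]
    have : ∀ i : Fin N, ⟪(N : ℝ) • y i - ∑ j, y j, A i⟫
        = (N : ℝ) * ⟪y i, A i⟫ - ⟪∑ j, y j, A i⟫ := by
      intro i
      rw [inner_sub_left, real_inner_smul_left]
    simp only [this, Finset.sum_sub_distrib]
    rw [Finset.mul_sum]
    congr 1
    simp [inner_sum, sum_inner]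
  have hdiag : ∀ i : Fin N, ⟪y i, A i⟫ = ∑ k, c i k * ⟪y i, v k - v i⟫ := by
    intro i
    rw [inner_sum]
    exact Finset.sum_congr rfl fun k _ => real_inner_smul_right _ _ _
  rw [key, hS1, hAzero, inner_zero_right, sub_zero]
  simp only [hdiag]
  rw [← mul_assoc, mul_comm (2:ℝ) ((N:ℝ)), mul_assoc, cs_two_s c hc y v]
  ring

end auxlemmas

set_option maxHeartbeats 1600000 in
/-- **Alignment on ℝᵈ, fourth-order variation (Theorem 1.1 (ii)).**
If the kernel `φ` is `C¹` on `[0,∞)` and dominates a non-increasing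
fat-tailed function `Φ` beyond some radius `r₀`, then any global solution
of the Cucker–Smale system on ℝᵈ aligns: `V₄(t) → 0`. -/
theorem cucker_smale_alignment_V4_Rd
    (d : ℕ) (φ Φ : ℝ → ℝ) (r₀ : ℝ) (hr₀ : 0 < r₀)
    (hφC1 : ContDiffOn ℝ 1 φ (Set.Ici 0))
    (hφnn : ∀ r, 0 ≤ r → 0 ≤ φ r)
    (hΦanti : AntitoneOn Φ (Set.Ioi r₀))
    (hΦnn : ∀ r, r₀ < r → 0 ≤ Φ r)
    (hΦle : ∀ r, r₀ < r → Φ r ≤ φ r)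
    (hfat : ¬ IntegrableOn Φ (Set.Ioi r₀))
    (N : ℕ) (hN : 1 ≤ N)
    (x v : Fin N → ℝ → EuclideanSpace ℝ (Fin d))
    (hx : ∀ i t, 0 ≤ t → HasDerivAt (x i) (v i t) t)
    (hv : ∀ i t, 0 ≤ t → HasDerivAt (v i)
        ((N : ℝ)⁻¹ • ∑ j, φ (‖x i t - x j t‖) • (v j t - v i t)) t) :
    Tendsto (fun t : ℝ => ((N : ℝ))⁻¹ ^ 2 * ∑ i, ∑ j, ‖v i t - v j t‖ ^ 4)
      atTop (nhds 0) := by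
  classical
  have hNR : (0:ℝ) < (N:ℝ) := by exact_mod_cast hN
  set c : ℝ → Fin N → Fin N → ℝ := fun t i j => φ (‖x i t - x j t‖) with hc_def
  have hcsymm : ∀ t i j, c t i j = c t j i := by
    intro t i j; simp only [hc_def, norm_sub_rev]
  have hcnn : ∀ t i j, 0 ≤ c t i j := fun t i j => hφnn _ (norm_nonneg _)
  set a : Fin N → ℝ → EuclideanSpace ℝ (Fin d) :=
    fun i t => (N : ℝ)⁻¹ • ∑ k, c t i k • (v k t - v i t) with ha_def
  have hva : ∀ i t, 0 ≤ t → HasDerivAt (v i) (a i t) t := hv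
  -- the master algebraic identity along the flow
  have hkey : ∀ (t : ℝ) (y : Fin N → EuclideanSpace ℝ (Fin d)),
      ∑ i, ∑ j, ⟪y i - y j, a i t - a j t⟫
        = -∑ i, ∑ k, c t i k * ⟪y i - y k, v i t - v k t⟫ := by
    intro t y
    have hsmul : ∀ i j : Fin N, a i t - a j t
        = (N : ℝ)⁻¹ • ((∑ k, c t i k • (v k t - v i t)) - (∑ k, c t j k • (v k t - v j t))) := by
      intro i j
      simp only [ha_def, smul_sub]
    have : ∑ i, ∑ j, ⟪y i - y j, a i t - a j t⟫
        = (N:ℝ)⁻¹ * ∑ i, ∑ j, ⟪y i - y j,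
            (∑ k, c t i k • (v k t - v i t)) - (∑ k, c t j k • (v k t - v j t))⟫ := by
      rw [Finset.mul_sum]
      refine Finset.sum_congr rfl fun i _ => ?_
      rw [Finset.mul_sum]
      refine Finset.sum_congr rfl fun j _ => ?_
      rw [hsmul i j, real_inner_smul_right]
    rw [this, cs_main_identity (c t) (hcsymm t) y (fun k => v k t)]
    field_simp
  set E : ℝ → ℝ := fun t => ∑ i, ∑ j, ⟪v i t - v j t, v i t - v j t⟫ with hE_def
  set D : ℝ → ℝ := fun t => ∑ i, ∑ j, c t i j * ⟪v i t - v j t, v i t - v j t⟫ with hD_def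
  have hEnn : ∀ t, 0 ≤ E t := by
    intro t
    exact Finset.sum_nonneg fun i _ => Finset.sum_nonneg fun j _ => real_inner_self_nonneg
  have hDnn : ∀ t, 0 ≤ D t := by
    intro t
    exact Finset.sum_nonneg fun i _ => Finset.sum_nonneg fun j _ =>
      mul_nonneg (hcnn t i j) real_inner_self_nonneg
  have hinE : ∀ (t : ℝ) (i j : Fin N), ⟪v i t - v j t, v i t - v j t⟫ ≤ E t := by
    intro t i j
    calc ⟪v i t - v j t, v i t - v j t⟫
        ≤ ∑ j', ⟪v i t - v j' t, v i t - v j' t⟫ :=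
          Finset.single_le_sum (f := fun j' => ⟪v i t - v j' t, v i t - v j' t⟫)
            (fun j' _ => real_inner_self_nonneg) (Finset.mem_univ j)
      _ ≤ E t := Finset.single_le_sum
          (f := fun i' => ∑ j', ⟪v i' t - v j' t, v i' t - v j' t⟫)
          (fun i' _ => Finset.sum_nonneg fun j' _ => real_inner_self_nonneg)
          (Finset.mem_univ i)
  have hE' : ∀ t, 0 ≤ t → HasDerivAt E (-2 * D t) t := by
    intro t ht
    have hterm : ∀ i j : Fin N, HasDerivAt (fun s => ⟪v i s - v j s, v i s - v j s⟫)
        (⟪v i t - v j t, a i t - a j t⟫ + ⟪a i t - a j t, v i t - v j t⟫) t := by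
      intro i j
      have hw : HasDerivAt (fun s => v i s - v j s) (a i t - a j t) t :=
        (hva i t ht).sub (hva j t ht)
      exact hw.inner ℝ hw
    have hsum : HasDerivAt E
        (∑ i, ∑ j, (⟪v i t - v j t, a i t - a j t⟫ + ⟪a i t - a j t, v i t - v j t⟫)) t := by
      apply HasDerivAt.fun_sum fun i _ => ?_
      exact HasDerivAt.fun_sum fun j _ => hterm i j
    have heq : (∑ i, ∑ j, (⟪v i t - v j t, a i t - a j t⟫ + ⟪a i t - a j t, v i t - v j t⟫))
        = -2 * D t := by
      have h2 : ∀ i j : Fin N, ⟪v i t - v j t, a i t - a j t⟫ + ⟪a i t - a j t, v i t - v j t⟫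
          = 2 * ⟪v i t - v j t, a i t - a j t⟫ := by
        intro i j
        rw [real_inner_comm (a i t - a j t)]; ring
      simp only [h2]
      simp only [← Finset.mul_sum]
      have := hkey t (fun i => v i t)
      simp only [this]
      rw [hD_def]
      ring
    rw [← heq]
    exact hsum
  have hxc : ∀ i, ContinuousOn (x i) (Set.Ici 0) := by
    intro i
    exact fun t ht => ((hx i t ht).continuousAt).continuousWithinAt
  have hvc : ∀ i, ContinuousOn (v i) (Set.Ici 0) := by
    intro i
    exact fun t ht => ((hva i t ht).continuousAt).continuousWithinAt
  have hcc : ∀ i j, ContinuousOn (fun t => c t i j) (Set.Ici 0) := by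
    intro i j
    have hn : ContinuousOn (fun t => ‖x i t - x j t‖) (Set.Ici 0) :=
      ((hxc i).sub (hxc j)).norm
    exact (hφC1.continuousOn).comp hn fun t _ => norm_nonneg _
  have hDc : ContinuousOn D (Set.Ici 0) := by
    apply continuousOn_finset_sum _ fun i _ => ?_
    apply continuousOn_finset_sum _ fun j _ => ?_
    exact (hcc i j).mul (((hvc i).sub (hvc j)).inner ((hvc i).sub (hvc j)))
  have hEc : ContinuousOn E (Set.Ici 0) := by
    intro t ht; exact ((hE' t ht).continuousAt).continuousWithinAt
  have hEanti : AntitoneOn E (Set.Ici 0) := by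
    apply antitoneOn_of_deriv_nonpos (convex_Ici 0) hEc
    · intro t ht
      rw [interior_Ici] at ht
      exact ((hE' t (le_of_lt ht)).differentiableAt).differentiableWithinAt
    · intro t ht
      rw [interior_Ici] at ht
      rw [(hE' t (le_of_lt ht)).deriv]
      have := hDnn t; linarith
  -- The crux : E tends to zero
  have hE0 : Tendsto E atTop (nhds 0) := by
    set Et : ℝ → ℝ := fun t => E (max t 0) with hEt_def
    have hEtanti : Antitone Et := by
      intro s t hst
      exact hEanti (Set.mem_Ici.2 (le_max_right s 0)) (Set.mem_Ici.2 (le_max_right t 0))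
        (max_le_max hst le_rfl)
    have hEtbdd : BddBelow (Set.range Et) := by
      refine ⟨0, ?_⟩; rintro _ ⟨t, rfl⟩; exact hEnn _
    have hEtL : Tendsto Et atTop (nhds (⨅ t, Et t)) := tendsto_atTop_ciInf hEtanti hEtbdd
    set L := ⨅ t, Et t with hL_def
    have hLnn : 0 ≤ L := le_ciInf fun t => hEnn _
    have hLE : ∀ t, 0 ≤ t → L ≤ E t := by
      intro t ht
      have h1 := ciInf_le hEtbdd t
      have h2 : Et t = E t := by rw [hEt_def]; simp [max_eq_left ht]
      rwa [h2] at h1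
    have hL0 : L = 0 := by
      by_contra hLne
      have hLpos : 0 < L := lt_of_le_of_ne hLnn (Ne.symm hLne)
      -- velocity bound
      set c₀ : ℝ := Real.sqrt (E 0) + 1 with hc₀_def
      have hc₀pos : 0 < c₀ := by positivity
      have hwnorm : ∀ t, 0 ≤ t → ∀ i j, ‖v i t - v j t‖ ≤ c₀ := by
        intro t ht i j
        have h1 := hinE t i j
        have h2 : E t ≤ E 0 := hEanti (Set.self_mem_Ici) (Set.mem_Ici.2 ht) ht
        have h3 : ‖v i t - v j t‖ ^ 2 ≤ E 0 := by
          rw [← real_inner_self_eq_norm_sq]; linarith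
        have h4 : ‖v i t - v j t‖ ≤ Real.sqrt (E 0) :=
          (Real.le_sqrt (norm_nonneg _) (hEnn 0)).2 h3
        rw [hc₀_def]; linarith
      -- position bound
      set R₀ : ℝ := ∑ i, ∑ j, ‖x i 0 - x j 0‖ with hR₀_def
      have hR₀nn : 0 ≤ R₀ :=
        Finset.sum_nonneg fun i _ => Finset.sum_nonneg fun j _ => norm_nonneg _
      have hzbound : ∀ t, 0 ≤ t → ∀ i j, ‖x i t - x j t‖ ≤ R₀ + c₀ * t := by
        intro t ht i j
        have key : ∀ s ∈ Set.Icc (0:ℝ) t,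
            HasDerivWithinAt (fun u => x i u - x j u) (v i s - v j s) (Set.Icc 0 t) s :=
          fun s hs => (((hx i s hs.1).sub (hx j s hs.1))).hasDerivWithinAt
        have hb : ∀ s ∈ Set.Icc (0:ℝ) t, ‖v i s - v j s‖ ≤ c₀ := fun s hs => hwnorm s hs.1 i j
        have hmvt := (convex_Icc (0:ℝ) t).norm_image_sub_le_of_norm_hasDerivWithin_le key hb
          (Set.left_mem_Icc.2 ht) (Set.right_mem_Icc.2 ht)
        have hz0 : ‖x i 0 - x j 0‖ ≤ R₀ := by
          calc ‖x i 0 - x j 0‖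
              ≤ ∑ j', ‖x i 0 - x j' 0‖ :=
                Finset.single_le_sum (f := fun j' => ‖x i 0 - x j' 0‖)
                  (fun j' _ => norm_nonneg _) (Finset.mem_univ j)
            _ ≤ R₀ := Finset.single_le_sum (f := fun i' => ∑ j', ‖x i' 0 - x j' 0‖)
                (fun i' _ => Finset.sum_nonneg fun j' _ => norm_nonneg _) (Finset.mem_univ i)
        have htri : ‖x i t - x j t‖ ≤ ‖x i 0 - x j 0‖ + ‖(x i t - x j t) - (x i 0 - x j 0)‖ := by
          have := norm_add_le (x i 0 - x j 0) ((x i t - x j t) - (x i 0 - x j 0))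
          simpa using this
        have habs : ‖t - 0‖ = t := by rw [sub_zero, Real.norm_eq_abs, abs_of_nonneg ht]
        rw [habs] at hmvt
        linarith
      set A : ℝ := r₀ + 1 + R₀ with hA_def
      have hAgt : r₀ < A := by linarith
      -- the antitone extension g of Φ and its upper bound M₁
      obtain ⟨rmax, hrmax_mem, hrmax⟩ : ∃ rm ∈ Set.Icc (0:ℝ) (r₀+1),
          ∀ r ∈ Set.Icc (0:ℝ) (r₀+1), φ r ≤ φ rm := by
        have h := isCompact_Icc.exists_isMaxOn (Set.nonempty_Icc.2 (by linarith : (0:ℝ) ≤ r₀ + 1))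
          (hφC1.continuousOn.mono (fun r hr => hr.1))
        obtain ⟨rm, hrm, hmax⟩ := h
        exact ⟨rm, hrm, fun r hr => hmax hr⟩
      set M₁ : ℝ := φ rmax with hM₁_def
      have hM₁nn : 0 ≤ M₁ := hφnn _ hrmax_mem.1
      have hΦM : ∀ r, r₀ < r → Φ r ≤ M₁ := by
        intro r hr
        by_cases h : r ≤ r₀ + 1
        · exact le_trans (hΦle r hr) (hrmax r ⟨by linarith, h⟩)
        · have h1 : Φ r ≤ Φ (r₀ + 1) :=
            hΦanti (Set.mem_Ioi.2 (by linarith)) (Set.mem_Ioi.2 hr) (by linarith)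
          exact le_trans h1 (le_trans (hΦle _ (by linarith))
            (hrmax _ ⟨by linarith, le_refl _⟩))
      set g : ℝ → ℝ := fun r => if r₀ < r then Φ r else M₁ with hg_def
      have hganti : Antitone g := by
        intro r s hrs
        by_cases hs : r₀ < s
        · by_cases hr : r₀ < r
          · simp only [hg_def, if_pos hs, if_pos hr]
            exact hΦanti (Set.mem_Ioi.2 hr) (Set.mem_Ioi.2 hs) hrs
          · simp only [hg_def, if_pos hs, if_neg hr]
            exact hΦM s hs
        · have hr : ¬ r₀ < r := fun h => hs (lt_of_lt_of_le h hrs)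
          simp [hg_def, hs, hr]
      have hgnn : ∀ r, 0 ≤ g r := by
        intro r
        by_cases h : r₀ < r
        · simpa [hg_def, h] using hΦnn r h
        · simpa [hg_def, h] using hM₁nn
      have hgM : ∀ r, g r ≤ M₁ := by
        intro r
        by_cases h : r₀ < r
        · simpa [hg_def, h] using hΦM r h
        · simp [hg_def, h]
      have hgΦ : Set.EqOn g Φ (Set.Ioi r₀) := by
        intro r hr; simp [hg_def, Set.mem_Ioi.1 hr]
      -- the time weight β
      set β : ℝ → ℝ := fun t => g (c₀ * t + A) with hβ_def
      have hβanti : Antitone β := by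
        intro s t hst
        have : c₀ * s + A ≤ c₀ * t + A := by nlinarith
        exact hganti this
      have hβM : ∀ t, β t ≤ M₁ := fun t => hgM _
      have hβnn : ∀ t, 0 ≤ β t := fun t => hgnn _
      have hβΦ : ∀ t, 0 ≤ t → β t = Φ (c₀ * t + A) := by
        intro t ht
        have : r₀ < c₀ * t + A := by nlinarith
        simp [hβ_def, hg_def, this]
      have hβle : ∀ t, 0 ≤ t → ∀ p q : Fin N, r₀ < ‖x p t - x q t‖ →
          β t ≤ c t p q := by
        intro t ht p q hpq
        have h1 : ‖x p t - x q t‖ ≤ c₀ * t + A := by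
          have := hzbound t ht p q
          rw [hA_def]; nlinarith
        have h2 : r₀ < c₀ * t + A := lt_of_lt_of_le hpq h1
        rw [hβΦ t ht]
        calc Φ (c₀ * t + A) ≤ Φ ‖x p t - x q t‖ :=
              hΦanti (Set.mem_Ioi.2 hpq) (Set.mem_Ioi.2 h2) h1
          _ ≤ φ ‖x p t - x q t‖ := hΦle _ hpq
          _ = c t p q := by rw [hc_def]
      -- the potential Psi
      set ψ : ℝ → ℝ := fun s => φ (Real.sqrt s) / 2 with hψ_def
      have hψcont : Continuous ψ := by
        have h1 : Continuous fun s : ℝ => φ (Real.sqrt s) :=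
          hφC1.continuousOn.comp_continuous Real.continuous_sqrt
            (fun s => Set.mem_Ici.2 (Real.sqrt_nonneg s))
        exact h1.div_const 2
      have hψnn : ∀ s, 0 ≤ ψ s := by
        intro s
        have := hφnn (Real.sqrt s) (Real.sqrt_nonneg s)
        simp only [hψ_def]; linarith
      set Psi : ℝ → ℝ := fun u => ∫ s in (0:ℝ)..u, ψ s with hPsi_def
      have hPsid : ∀ u, HasDerivAt Psi (ψ u) u := by
        intro u
        exact (hψcont.integral_hasStrictDerivAt 0 u).hasDerivAt
      have hPsimono : Monotone Psi := by
        intro u u' h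
        have hadd := intervalIntegral.integral_add_adjacent_intervals
          (hψcont.intervalIntegrable (μ := volume) 0 u) (hψcont.intervalIntegrable u u')
        have h2 : 0 ≤ ∫ s in u..u', ψ s :=
          intervalIntegral.integral_nonneg h (fun s _ => hψnn s)
        rw [hPsi_def]
        simp only []
        linarith [hadd]
      -- the grand functional W
      set W : ℝ → ℝ := fun t => ∑ i, ∑ j,
          (⟪x i t - x j t, v i t - v j t⟫ + Psi (⟪x i t - x j t, x i t - x j t⟫)) with hW_def
      have hW' : ∀ t, 0 ≤ t → HasDerivAt W (E t) t := by
        intro t ht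
        have hterm : ∀ i j : Fin N, HasDerivAt (fun s => ⟪x i s - x j s, v i s - v j s⟫
              + Psi (⟪x i s - x j s, x i s - x j s⟫))
            ((⟪x i t - x j t, a i t - a j t⟫ + ⟪v i t - v j t, v i t - v j t⟫)
              + c t i j * ⟪x i t - x j t, v i t - v j t⟫) t := by
          intro i j
          have hz : HasDerivAt (fun s => x i s - x j s) (v i t - v j t) t :=
            (hx i t ht).sub (hx j t ht)
          have hw : HasDerivAt (fun s => v i s - v j s) (a i t - a j t) t :=
            (hva i t ht).sub (hva j t ht)
          have h1 : HasDerivAt (fun s => ⟪x i s - x j s, v i s - v j s⟫)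
              (⟪x i t - x j t, a i t - a j t⟫ + ⟪v i t - v j t, v i t - v j t⟫) t :=
            hz.inner ℝ hw
          have hu : HasDerivAt (fun s => ⟪x i s - x j s, x i s - x j s⟫)
              (⟪x i t - x j t, v i t - v j t⟫ + ⟪v i t - v j t, x i t - x j t⟫) t :=
            hz.inner ℝ hz
          have h2 := (hPsid (⟪x i t - x j t, x i t - x j t⟫)).comp t hu
          have h3 : ψ (⟪x i t - x j t, x i t - x j t⟫)
              * (⟪x i t - x j t, v i t - v j t⟫ + ⟪v i t - v j t, x i t - x j t⟫)
              = c t i j * ⟪x i t - x j t, v i t - v j t⟫ := by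
            have hsq : Real.sqrt (⟪x i t - x j t, x i t - x j t⟫) = ‖x i t - x j t‖ := by
              rw [real_inner_self_eq_norm_sq, Real.sqrt_sq (norm_nonneg _)]
            rw [hψ_def]
            simp only []
            rw [hsq, real_inner_comm (v i t - v j t) (x i t - x j t), hc_def]
            ring
          rw [h3] at h2
          exact h1.add h2
        have hsum := HasDerivAt.fun_sum
          (fun i (_ : i ∈ Finset.univ) => HasDerivAt.fun_sum (fun j (_ : j ∈ Finset.univ) => hterm i j))
        have hEt : E t = ∑ i, ∑ j, ⟪v i t - v j t, v i t - v j t⟫ := rfl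
        have heq : (∑ i, ∑ j, ((⟪x i t - x j t, a i t - a j t⟫
              + ⟪v i t - v j t, v i t - v j t⟫)
              + c t i j * ⟪x i t - x j t, v i t - v j t⟫)) = E t := by
          simp only [Finset.sum_add_distrib]
          have h4 := hkey t (fun i => x i t)
          rw [hEt, h4]
          ring
        rw [← heq]
        exact hsum
      have hWlow : ∀ t, 0 ≤ t → W 0 + L * t ≤ W t := by
        intro t ht
        set F : ℝ → ℝ := fun s => W s - L * s with hF_def
        have hF' : ∀ s, 0 ≤ s → HasDerivAt F (E s - L) s := by
          intro s hs
          have hlin : HasDerivAt (fun u : ℝ => L * u) L s := by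
            simpa using (hasDerivAt_id s).const_mul L
          exact (hW' s hs).sub hlin
        have hFmono : MonotoneOn F (Set.Ici 0) := by
          apply monotoneOn_of_deriv_nonneg (convex_Ici 0)
          · exact fun s hs => ((hF' s hs).continuousAt).continuousWithinAt
          · intro s hs
            rw [interior_Ici] at hs
            exact ((hF' s (le_of_lt hs)).differentiableAt).differentiableWithinAt
          · intro s hs
            rw [interior_Ici] at hs
            rw [(hF' s (le_of_lt hs)).deriv]
            have := hLE s (le_of_lt hs)
            linarith
        have h5 : F 0 ≤ F t := hFmono Set.self_mem_Ici (Set.mem_Ici.2 ht) ht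
        have h6 : F 0 = W 0 := by rw [hF_def]; simp
        have h7 : F t = W t - L * t := rfl
        rw [h6, h7] at h5
        linarith
      set ρ : ℝ := 18 * (r₀ + 1) with hρ_def
      have hρpos : 0 < ρ := by linarith
      set Wbar : ℝ := (N:ℝ) * ((N:ℝ) * (ρ * c₀ + Psi (ρ^2))) with hWbar_def
      have hcompactW : ∀ t, 0 ≤ t → (∀ i j, ‖x i t - x j t‖ ≤ ρ) → W t ≤ Wbar := by
        intro t ht hz
        have hterm : ∀ i j : Fin N, ⟪x i t - x j t, v i t - v j t⟫
            + Psi (⟪x i t - x j t, x i t - x j t⟫) ≤ ρ * c₀ + Psi (ρ^2) := by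
          intro i j
          have h1 : ⟪x i t - x j t, v i t - v j t⟫ ≤ ρ * c₀ := by
            refine le_trans (real_inner_le_norm _ _) ?_
            exact mul_le_mul (hz i j) (hwnorm t ht i j) (norm_nonneg _) (le_of_lt hρpos)
          have h2 : Psi (⟪x i t - x j t, x i t - x j t⟫) ≤ Psi (ρ^2) := by
            apply hPsimono
            rw [real_inner_self_eq_norm_sq]
            exact pow_le_pow_left₀ (norm_nonneg _) (hz i j) 2
          linarith
        have hWt : W t = ∑ i, ∑ j, (⟪x i t - x j t, v i t - v j t⟫
            + Psi (⟪x i t - x j t, x i t - x j t⟫)) := rfl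
        rw [hWt, hWbar_def]
        calc (∑ i, ∑ j, (⟪x i t - x j t, v i t - v j t⟫
              + Psi (⟪x i t - x j t, x i t - x j t⟫)))
            ≤ ∑ _i : Fin N, ∑ _j : Fin N, (ρ * c₀ + Psi (ρ^2)) :=
              Finset.sum_le_sum fun i _ => Finset.sum_le_sum fun j _ => hterm i j
          _ = (N:ℝ) * ((N:ℝ) * (ρ * c₀ + Psi (ρ^2))) := by
              simp [Finset.sum_const, Finset.card_univ, nsmul_eq_mul]
              ring
      set T₀ : ℝ := max 0 ((Wbar - W 0) / L) + 1 with hT₀_def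
      have hT₀nn : 0 ≤ T₀ := by
        rw [hT₀_def]
        have := le_max_left (0:ℝ) ((Wbar - W 0) / L); linarith
      have hfar : ∀ t, T₀ ≤ t → ∃ m k : Fin N, ρ < ‖x m t - x k t‖ := by
        intro t ht
        by_contra hcon
        push_neg at hcon
        have htnn : 0 ≤ t := le_trans hT₀nn ht
        have h1 : W t ≤ Wbar := hcompactW t htnn hcon
        have h2 : W 0 + L * t ≤ W t := hWlow t htnn
        have h3 : (Wbar - W 0) / L ≤ T₀ - 1 := by
          rw [hT₀_def]
          have := le_max_right (0:ℝ) ((Wbar - W 0) / L)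
          linarith
        have h4 : Wbar - W 0 ≤ L * (T₀ - 1) := by
          rw [div_le_iff₀ hLpos] at h3; linarith
        have h5 : L * t ≤ L * (T₀ - 1) := by linarith
        have h6 : t ≤ T₀ - 1 := (mul_le_mul_iff_right₀ hLpos).1 h5
        linarith
      -- key dissipation estimate beyond T₀
      have hkeyest : ∀ t, T₀ ≤ t → β t * E t ≤ 4 * ((N:ℝ) * (N:ℝ)) * D t := by
        intro t ht
        have htnn : 0 ≤ t := le_trans hT₀nn ht
        obtain ⟨m, k, hmk⟩ := hfar t ht
        have hDt : D t = ∑ i, ∑ j, c t i j * ⟪v i t - v j t, v i t - v j t⟫ := rfl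
        have hterm : ∀ p q : Fin N, c t p q * ⟪v p t - v q t, v p t - v q t⟫ ≤ D t := by
          intro p q
          rw [hDt]
          calc c t p q * ⟪v p t - v q t, v p t - v q t⟫
              ≤ ∑ q', c t p q' * ⟪v p t - v q' t, v p t - v q' t⟫ :=
                Finset.single_le_sum
                  (f := fun q' => c t p q' * ⟪v p t - v q' t, v p t - v q' t⟫)
                  (fun q' _ => mul_nonneg (hcnn t p q') real_inner_self_nonneg)
                  (Finset.mem_univ q)
            _ ≤ ∑ i, ∑ j, c t i j * ⟪v i t - v j t, v i t - v j t⟫ :=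
                Finset.single_le_sum
                  (f := fun i => ∑ j, c t i j * ⟪v i t - v j t, v i t - v j t⟫)
                  (fun i _ => Finset.sum_nonneg fun j _ =>
                    mul_nonneg (hcnn t i j) real_inner_self_nonneg)
                  (Finset.mem_univ p)
        have hpair : ∀ i j : Fin N,
            β t * ⟪v i t - v j t, v i t - v j t⟫ ≤ 4 * D t := by
          intro i j
          by_cases hcase : r₀ < ‖x i t - x j t‖
          · have h1 : β t ≤ c t i j := hβle t htnn i j hcase
            have h2 : β t * ⟪v i t - v j t, v i t - v j t⟫
                ≤ c t i j * ⟪v i t - v j t, v i t - v j t⟫ :=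
              mul_le_mul_of_nonneg_right h1 real_inner_self_nonneg
            have h3 := hterm i j
            have h4 := hDnn t
            linarith
          · push_neg at hcase
            obtain ⟨p, hp⟩ : ∃ p : Fin N, 9 * (r₀ + 1) < ‖x i t - x p t‖ := by
              by_contra hcon
              push_neg at hcon
              have h1 := hcon m
              have h2 := hcon k
              have htri : ‖x m t - x k t‖ ≤ ‖x i t - x m t‖ + ‖x i t - x k t‖ := by
                have he : x m t - x k t = -(x i t - x m t) + (x i t - x k t) := by abel
                rw [he]
                exact le_trans (norm_add_le _ _) (by rw [norm_neg])
              rw [hρ_def] at hmk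
              linarith
            have hip : r₀ < ‖x i t - x p t‖ := by linarith
            have hjp : r₀ < ‖x j t - x p t‖ := by
              have htri2 : ‖x i t - x p t‖ ≤ ‖x i t - x j t‖ + ‖x j t - x p t‖ := by
                have he : x i t - x p t = (x i t - x j t) + (x j t - x p t) := by abel
                rw [he]; exact norm_add_le _ _
              linarith
            have hbi : β t ≤ c t i p := hβle t htnn i p hip
            have hbj : β t ≤ c t j p := hβle t htnn j p hjp
            have hwtri : ⟪v i t - v j t, v i t - v j t⟫
                ≤ 2 * ⟪v i t - v p t, v i t - v p t⟫
                  + 2 * ⟪v j t - v p t, v j t - v p t⟫ := by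
              simp only [real_inner_self_eq_norm_sq]
              have he : v i t - v j t = (v i t - v p t) - (v j t - v p t) := by abel
              have h1 : ‖v i t - v j t‖ ≤ ‖v i t - v p t‖ + ‖v j t - v p t‖ := by
                rw [he]; exact norm_sub_le _ _
              have h2 : ‖v i t - v j t‖ * ‖v i t - v j t‖
                  ≤ (‖v i t - v p t‖ + ‖v j t - v p t‖) * (‖v i t - v p t‖ + ‖v j t - v p t‖) :=
                mul_le_mul h1 h1 (norm_nonneg _) (by positivity)
              nlinarith [h2, sq_nonneg (‖v i t - v p t‖ - ‖v j t - v p t‖)]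
            have h4 : β t * ⟪v i t - v j t, v i t - v j t⟫
                ≤ 2 * (β t * ⟪v i t - v p t, v i t - v p t⟫)
                  + 2 * (β t * ⟪v j t - v p t, v j t - v p t⟫) := by
              have := mul_le_mul_of_nonneg_left hwtri (hβnn t)
              linarith [this]
            have h5 : β t * ⟪v i t - v p t, v i t - v p t⟫
                ≤ c t i p * ⟪v i t - v p t, v i t - v p t⟫ :=
              mul_le_mul_of_nonneg_right hbi real_inner_self_nonneg
            have h6 : β t * ⟪v j t - v p t, v j t - v p t⟫
                ≤ c t j p * ⟪v j t - v p t, v j t - v p t⟫ :=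
              mul_le_mul_of_nonneg_right hbj real_inner_self_nonneg
            have h7 := hterm i p
            have h8 := hterm j p
            linarith
        have hEt : E t = ∑ i, ∑ j, ⟪v i t - v j t, v i t - v j t⟫ := rfl
        calc β t * E t = ∑ i, ∑ j, β t * ⟪v i t - v j t, v i t - v j t⟫ := by
              rw [hEt]; simp only [Finset.mul_sum]
          _ ≤ ∑ _i : Fin N, ∑ _j : Fin N, 4 * D t :=
              Finset.sum_le_sum fun i _ => Finset.sum_le_sum fun j _ => hpair i j
          _ = 4 * ((N:ℝ) * (N:ℝ)) * D t := by
              simp [Finset.sum_const, Finset.card_univ, nsmul_eq_mul]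
              ring
      -- integral bounds
      have hDint : ∀ T₁ T₂, 0 ≤ T₁ → T₁ ≤ T₂ → ∫ t in T₁..T₂, D t ≤ E 0 / 2 := by
        intro T₁ T₂ h1 h12
        have hderiv : ∀ s ∈ Set.uIcc T₁ T₂, HasDerivAt E (-2 * D s) s := by
          intro s hs
          rw [Set.uIcc_of_le h12] at hs
          exact hE' s (le_trans h1 hs.1)
        have hDcon : ContinuousOn (fun s => -2 * D s) (Set.uIcc T₁ T₂) := by
          rw [Set.uIcc_of_le h12]
          exact continuousOn_const.mul
            (hDc.mono (fun s hs => Set.mem_Ici.2 (le_trans h1 hs.1)))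
        have hii : IntervalIntegrable (fun s => -2 * D s) volume T₁ T₂ :=
          hDcon.intervalIntegrable
        have hftc := intervalIntegral.integral_eq_sub_of_hasDerivAt hderiv hii
        have hmul : ∫ s in T₁..T₂, -2 * D s = -2 * ∫ s in T₁..T₂, D s :=
          intervalIntegral.integral_const_mul _ _
        have hE2 : 0 ≤ E T₂ := hEnn _
        have hE1 : E T₁ ≤ E 0 := hEanti Set.self_mem_Ici (Set.mem_Ici.2 h1) h1
        rw [hmul] at hftc
        linarith
      set C₁ : ℝ := (4 * ((N:ℝ) * (N:ℝ)) / L) * (E 0 / 2) with hC₁_def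
      have hC₁nn : 0 ≤ C₁ := by
        have := hEnn 0; positivity
      have hβD : ∀ T, T₀ ≤ T → ∫ t in T₀..T, β t ≤ C₁ := by
        intro T hT
        have hle2 : ∀ s ∈ Set.Icc T₀ T, β s ≤ (4 * ((N:ℝ) * (N:ℝ)) / L) * D s := by
          intro s hs
          have h1 := hkeyest s hs.1
          have h2 : L ≤ E s := hLE s (le_trans hT₀nn hs.1)
          have h3 : β s * L ≤ β s * E s := mul_le_mul_of_nonneg_left h2 (hβnn s)
          rw [div_mul_eq_mul_div, le_div_iff₀ hLpos]
          calc β s * L ≤ β s * E s := h3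
            _ ≤ 4 * ((N:ℝ) * (N:ℝ)) * D s := h1
        have hiβ : IntervalIntegrable β volume T₀ T := hβanti.intervalIntegrable
        have hiD : IntervalIntegrable (fun s => (4 * ((N:ℝ) * (N:ℝ)) / L) * D s) volume T₀ T := by
          apply ContinuousOn.intervalIntegrable
          rw [Set.uIcc_of_le hT]
          exact continuousOn_const.mul
            (hDc.mono (fun s hs => Set.mem_Ici.2 (le_trans hT₀nn hs.1)))
        have hmono := intervalIntegral.integral_mono_on hT hiβ hiD hle2
        rw [intervalIntegral.integral_const_mul] at hmono
        have h4 := hDint T₀ T hT₀nn hT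
        have hconst : 0 ≤ 4 * ((N:ℝ) * (N:ℝ)) / L := by positivity
        calc ∫ t in T₀..T, β t
            ≤ (4 * ((N:ℝ) * (N:ℝ)) / L) * ∫ s in T₀..T, D s := hmono
          _ ≤ (4 * ((N:ℝ) * (N:ℝ)) / L) * (E 0 / 2) := mul_le_mul_of_nonneg_left h4 hconst
          _ = C₁ := by rw [hC₁_def]
      set C₂ : ℝ := T₀ * M₁ + C₁ with hC₂_def
      have hhead : ∀ T', 0 ≤ T' → T' ≤ T₀ → ∫ s in (0:ℝ)..T', β s ≤ T₀ * M₁ := by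
        intro T' h0 hT'
        have hle2 : ∀ s ∈ Set.Icc (0:ℝ) T', β s ≤ M₁ := fun s _ => hβM s
        have hmono := intervalIntegral.integral_mono_on h0 (hβanti.intervalIntegrable)
          (intervalIntegrable_const (μ := volume) (c := M₁)) hle2
        rw [intervalIntegral.integral_const] at hmono
        have h2 : (T' - 0) • M₁ ≤ T₀ * M₁ := by
          rw [smul_eq_mul, sub_zero]
          exact mul_le_mul_of_nonneg_right hT' hM₁nn
        linarith
      have hβtotal : ∀ T, 0 ≤ T → ∫ t in (0:ℝ)..T, β t ≤ C₂ := by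
        intro T hT
        rw [hC₂_def]
        by_cases hcase : T ≤ T₀
        · have := hhead T hT hcase
          linarith
        · push_neg at hcase
          have hsplit := intervalIntegral.integral_add_adjacent_intervals
            (a := (0:ℝ)) (b := T₀) (c := T)
            (hβanti.intervalIntegrable (μ := volume)) (hβanti.intervalIntegrable (μ := volume))
          have hA1 := hhead T₀ hT₀nn le_rfl
          have hA2 := hβD T (le_of_lt hcase)
          linarith
      -- conclude : g is integrable on (r₀, ∞), contradicting hfat
      have hInt : IntegrableOn g (Set.Ioi r₀) := by
        have hmeasg : Measurable g := hganti.measurable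
        have hbdd : ∀ r : ℝ, ‖g r‖ ≤ M₁ := by
          intro r
          rw [Real.norm_eq_abs, abs_of_nonneg (hgnn r)]
          exact hgM r
        have hIoc : ∀ u w : ℝ, IntegrableOn g (Set.Ioc u w) := by
          intro u w
          refine Integrable.mono' (g := fun _ => M₁)
            (integrableOn_const measure_Ioc_lt_top.ne)
            (hmeasg.aestronglyMeasurable) ?_
          exact ae_of_all _ fun r => hbdd r
        have htail : IntegrableOn g (Set.Ioi A) := by
          apply integrableOn_Ioi_of_intervalIntegral_norm_bounded (c₀ * C₂) A
            (fun b : ℝ => hIoc A b) tendsto_id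
          filter_upwards [eventually_ge_atTop A] with b hb
          have hTnn : 0 ≤ (b - A) / c₀ := div_nonneg (by linarith) hc₀pos.le
          have hchg := intervalIntegral.integral_comp_mul_add (a := (0:ℝ))
            (b := (b - A) / c₀) (f := g) (ne_of_gt hc₀pos) A
          have he1 : c₀ * 0 + A = A := by ring
          have he2 : c₀ * ((b - A) / c₀) + A = b := by field_simp; ring
          rw [he1, he2] at hchg
          have hnorm : ∫ r in A..b, ‖g r‖ = ∫ r in A..b, g r := by
            apply intervalIntegral.integral_congr
            intro r _
            show ‖g r‖ = g r
            rw [Real.norm_eq_abs, abs_of_nonneg (hgnn r)]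
          rw [hnorm]
          have hβint := hβtotal ((b - A) / c₀) hTnn
          have hβeq : (∫ s in (0:ℝ)..((b - A) / c₀), β s)
              = ∫ s in (0:ℝ)..((b - A) / c₀), g (c₀ * s + A) := by
            apply intervalIntegral.integral_congr
            intro s _
            show β s = g (c₀ * s + A)
            rw [hβ_def]
          rw [hβeq, hchg, smul_eq_mul] at hβint
          -- hβint : c₀⁻¹ * ∫_A^b g ≤ C₂
          have hfin2 : ∫ r in A..b, g r ≤ c₀ * C₂ := by
            have := mul_le_mul_of_nonneg_left hβint hc₀pos.le
            rw [← mul_assoc, mul_inv_cancel₀ (ne_of_gt hc₀pos), one_mul] at this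
            exact this
          exact hfin2
        have hunion := (hIoc r₀ A).union htail
        rwa [Set.Ioc_union_Ioi_eq_Ioi (le_of_lt hAgt)] at hunion
      exact hfat (hInt.congr_fun hgΦ measurableSet_Ioi)
    have hEevent : Et =ᶠ[atTop] E := by
      filter_upwards [eventually_ge_atTop (0:ℝ)] with t ht
      simp [hEt_def, max_eq_left ht]
    rw [hL0] at hEtL
    exact hEtL.congr' hEevent
  -- conclude by squeezing V₄
  have hfin : ∀ t, 0 ≤ t →
      ((N : ℝ))⁻¹ ^ 2 * ∑ i, ∑ j, ‖v i t - v j t‖ ^ 4 ≤ ((N : ℝ))⁻¹ ^ 2 * (E t * E t) := by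
    intro t ht
    have hle : ∀ i j : Fin N, ⟪v i t - v j t, v i t - v j t⟫ ≤ E t := by
      intro i j
      calc ⟪v i t - v j t, v i t - v j t⟫
          ≤ ∑ j', ⟪v i t - v j' t, v i t - v j' t⟫ :=
            Finset.single_le_sum (f := fun j' => ⟪v i t - v j' t, v i t - v j' t⟫)
              (fun j' _ => real_inner_self_nonneg) (Finset.mem_univ j)
        _ ≤ E t := Finset.single_le_sum
            (f := fun i' => ∑ j', ⟪v i' t - v j' t, v i' t - v j' t⟫)
            (fun i' _ => Finset.sum_nonneg fun j' _ => real_inner_self_nonneg)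
            (Finset.mem_univ i)
    have hbound : ∑ i, ∑ j, ‖v i t - v j t‖ ^ 4 ≤ E t * E t := by
      have : ∀ i j : Fin N, ‖v i t - v j t‖ ^ 4
          ≤ E t * ⟪v i t - v j t, v i t - v j t⟫ := by
        intro i j
        have h1 : ‖v i t - v j t‖ ^ 4 = ⟪v i t - v j t, v i t - v j t⟫ ^ 2 := by
          rw [real_inner_self_eq_norm_sq]; ring
        rw [h1, sq]
        exact mul_le_mul_of_nonneg_right (hle i j) real_inner_self_nonneg
      calc ∑ i, ∑ j, ‖v i t - v j t‖ ^ 4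
          ≤ ∑ i, ∑ j, E t * ⟪v i t - v j t, v i t - v j t⟫ :=
            Finset.sum_le_sum fun i _ => Finset.sum_le_sum fun j _ => this i j
        _ = E t * E t := by
            rw [hE_def]
            simp only [Finset.mul_sum]
      -- done
    have hnn : (0:ℝ) ≤ ((N : ℝ))⁻¹ ^ 2 := by positivity
    exact mul_le_mul_of_nonneg_left hbound hnn
  have hg : Tendsto (fun t => ((N : ℝ))⁻¹ ^ 2 * (E t * E t)) atTop (nhds 0) := by
    have := (hE0.mul hE0).const_mul (((N : ℝ))⁻¹ ^ 2)
    simpa using this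
  apply tendsto_of_tendsto_of_tendsto_of_le_of_le' tendsto_const_nhds hg
  · filter_upwards [eventually_ge_atTop (0:ℝ)] with t ht
    positivity
  · filter_upwards [eventually_ge_atTop (0:ℝ)] with t ht
    exact hfin t ht
end

section
/- Let φ : [0,∞) → [0,∞) be continuous (or let the solution be collisionless when φ is only continuous on (0,∞)), and let (x_i, v_i)_{i=1}^N be a solution of the Cucker–Smale system on ℝ^d on an interval [0,T]. Then for every p ≥ 1 the variation V_p is non-increasing and satisfies, for all 0 ≤ s ≤ t ≤ T, V_p(t) ≤ V_p(s) − (1/N) ∫_s^t I_p(τ) dτ. -/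
open MeasureTheory Filter

private lemma gsq_mono (p ε : ℝ) (hp : 1 ≤ p) (hε : 0 < ε) :
    MonotoneOn (fun t : ℝ => t * (t ^ 2 + ε) ^ (p / 2 - 1)) (Set.Ici 0) := by
  intro u hu t ht hut
  simp only [Set.mem_Ici] at hu ht
  have hu2 : (0:ℝ) < u ^ 2 + ε := by positivity
  have ht2 : (0:ℝ) < t ^ 2 + ε := by positivity
  have hgu : 0 ≤ u * (u ^ 2 + ε) ^ (p / 2 - 1) := by positivity
  have hgt : 0 ≤ t * (t ^ 2 + ε) ^ (p / 2 - 1) := by positivity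
  have key : ∀ r : ℝ, 0 ≤ r →
      (r * (r ^ 2 + ε) ^ (p / 2 - 1)) ^ 2
        = (r ^ 2 + ε) ^ (p - 1) * (r ^ 2 / (r ^ 2 + ε)) := by
    intro r hr
    have hr2 : (0:ℝ) < r ^ 2 + ε := by positivity
    have h1 : ((r ^ 2 + ε) ^ (p / 2 - 1)) ^ 2 = (r ^ 2 + ε) ^ (p - 2) := by
      rw [← Real.rpow_natCast ((r ^ 2 + ε) ^ (p / 2 - 1)) 2, ← Real.rpow_mul hr2.le]
      norm_num
      ring_nf
    have h2 : (r ^ 2 + ε) ^ (p - 2) = (r ^ 2 + ε) ^ (p - 1) / (r ^ 2 + ε) := by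
      rw [show p - 2 = (p - 1) - 1 by ring, Real.rpow_sub hr2, Real.rpow_one]
    rw [mul_pow, h1, h2]
    ring
  rw [← pow_le_pow_iff_left₀ hgu hgt (two_ne_zero), key u hu, key t ht]
  have f1 : (u ^ 2 + ε) ^ (p - 1) ≤ (t ^ 2 + ε) ^ (p - 1) :=
    Real.rpow_le_rpow hu2.le (by nlinarith) (by linarith)
  have f2 : u ^ 2 / (u ^ 2 + ε) ≤ t ^ 2 / (t ^ 2 + ε) := by
    rw [div_le_div_iff₀ hu2 ht2]
    nlinarith [mul_le_mul hut hut hu ht]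
  have f3 : (0:ℝ) ≤ u ^ 2 / (u ^ 2 + ε) := by positivity
  exact mul_le_mul f1 f2 f3 (by positivity)

private lemma low_bound (p ε : ℝ) (hp : 1 ≤ p) (hε : 0 < ε) (r : ℝ) (hr : 0 ≤ r) :
    r ^ p ≤ (r ^ 2 + ε) ^ (p / 2 - 1) * r ^ 2 + ε ^ (p / 2) := by
  rcases eq_or_lt_of_le hr with h0 | h0
  · rw [← h0]
    rw [Real.zero_rpow (by linarith)]
    positivity
  have hr2 : (0:ℝ) < r ^ 2 + ε := by positivity
  have hrsq : (0:ℝ) < r ^ 2 := by positivity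
  have hrp : r ^ p = (r ^ 2) ^ (p / 2) := by
    rw [← Real.rpow_natCast r 2, ← Real.rpow_mul hr]
    norm_num
    ring_nf
  rcases le_total 2 p with h2 | h2
  · -- p ≥ 2 : first term already dominates
    have hmono : (r ^ 2) ^ (p / 2 - 1) ≤ (r ^ 2 + ε) ^ (p / 2 - 1) :=
      Real.rpow_le_rpow (by positivity) (by linarith) (by linarith)
    have e : (r ^ 2) ^ (p / 2 - 1) * r ^ 2 = r ^ p := by
      calc (r ^ 2) ^ (p / 2 - 1) * r ^ 2
          = (r ^ 2) ^ (p / 2 - 1) * (r ^ 2) ^ (1:ℝ) := by rw [Real.rpow_one]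
        _ = (r ^ 2) ^ (p / 2) := by rw [← Real.rpow_add hrsq]; ring_nf
        _ = r ^ p := hrp.symm
    nlinarith [Real.rpow_nonneg hε.le (p / 2), sq_nonneg r]
  · rcases le_total (r ^ 2) ε with hcase | hcase
    · -- r² ≤ ε
      have h1 : r ^ p ≤ ε ^ (p / 2) := by
        rw [hrp]; exact Real.rpow_le_rpow (by positivity) hcase (by linarith)
      nlinarith [mul_nonneg (Real.rpow_nonneg hr2.le (p / 2 - 1)) (sq_nonneg r)]
    · -- ε ≤ r²
      set x := r ^ 2 / (r ^ 2 + ε) with hx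
      have hx0 : 0 < x := by positivity
      have hx1 : x ≤ 1 := by rw [hx, div_le_one hr2]; linarith
      have hB : ((r ^ 2 + ε) ^ (1 - p / 2))⁻¹ = (r ^ 2 + ε) ^ (p / 2 - 1) := by
        rw [← Real.rpow_neg hr2.le]; ring_nf
      have hA : x ^ (1 - p / 2)
          = (r ^ 2) ^ (1 - p / 2) * (r ^ 2 + ε) ^ (p / 2 - 1) := by
        rw [hx, Real.div_rpow (by positivity) hr2.le, div_eq_mul_inv, hB]
      have hid : (r ^ 2 + ε) ^ (p / 2 - 1) * r ^ 2 = r ^ p * x ^ (1 - p / 2) := by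
        symm
        calc r ^ p * x ^ (1 - p / 2)
            = ((r ^ 2) ^ (p / 2) * (r ^ 2) ^ (1 - p / 2)) * (r ^ 2 + ε) ^ (p / 2 - 1) := by
              rw [hrp, hA]; ring
          _ = (r ^ 2) ^ (1:ℝ) * (r ^ 2 + ε) ^ (p / 2 - 1) := by
              rw [← Real.rpow_add hrsq]; ring_nf
          _ = (r ^ 2 + ε) ^ (p / 2 - 1) * r ^ 2 := by rw [Real.rpow_one]; ring
      have hxs : x ≤ x ^ (1 - p / 2) := by
        have := Real.rpow_le_rpow_of_exponent_ge hx0 hx1 (by linarith : 1 - p / 2 ≤ (1:ℝ))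
        rwa [Real.rpow_one] at this
      have hrpnn : 0 ≤ r ^ p := Real.rpow_nonneg hr p
      have step1 : r ^ p - (r ^ 2 + ε) ^ (p / 2 - 1) * r ^ 2 ≤ r ^ p * (1 - x) := by
        rw [hid]; nlinarith
      have h1x : 1 - x = ε / (r ^ 2 + ε) := by rw [hx]; field_simp; ring
      have step2 : r ^ p * (1 - x) ≤ ε * (r ^ 2) ^ (p / 2 - 1) := by
        rw [h1x, hrp]
        calc (r ^ 2) ^ (p / 2) * (ε / (r ^ 2 + ε))
            ≤ (r ^ 2) ^ (p / 2) * (ε / r ^ 2) := by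
              apply mul_le_mul_of_nonneg_left _ (by positivity)
              exact div_le_div_of_nonneg_left hε.le hrsq (by linarith)
          _ = ε * ((r ^ 2) ^ (p / 2) * ((r ^ 2) ^ ((-1:ℝ)))) := by
              rw [Real.rpow_neg_one]; ring
          _ = ε * (r ^ 2) ^ (p / 2 - 1) := by
              rw [← Real.rpow_add hrsq]; ring_nf
      have step3 : ε * (r ^ 2) ^ (p / 2 - 1) ≤ ε ^ (p / 2) := by
        have hmono : (r ^ 2) ^ (p / 2 - 1) ≤ ε ^ (p / 2 - 1) :=
          Real.rpow_le_rpow_of_nonpos hε hcase (by linarith)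
        calc ε * (r ^ 2) ^ (p / 2 - 1) ≤ ε * ε ^ (p / 2 - 1) :=
              mul_le_mul_of_nonneg_left hmono hε.le
          _ = ε ^ (1:ℝ) * ε ^ (p / 2 - 1) := by rw [Real.rpow_one]
          _ = ε ^ (p / 2) := by rw [← Real.rpow_add hε]; ring_nf
      linarith

private lemma mono_op {E : Type*} [NormedAddCommGroup E] [InnerProductSpace ℝ E]
    (p ε : ℝ) (hp : 1 ≤ p) (hε : 0 < ε) (a b : E) :
    (0:ℝ) ≤ inner ℝ (a - b)
      ((‖a‖ ^ 2 + ε) ^ (p / 2 - 1) • a - (‖b‖ ^ 2 + ε) ^ (p / 2 - 1) • b) := by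
  set α := (‖a‖ ^ 2 + ε) ^ (p / 2 - 1) with hα
  set β := (‖b‖ ^ 2 + ε) ^ (p / 2 - 1) with hβ
  have hαnn : 0 ≤ α := by rw [hα]; positivity
  have hβnn : 0 ≤ β := by rw [hβ]; positivity
  have expand : (inner ℝ (a - b) (α • a - β • b) : ℝ)
      = α * ‖a‖ ^ 2 + β * ‖b‖ ^ 2 - (α + β) * inner ℝ a b := by
    simp only [inner_sub_left, inner_sub_right, real_inner_smul_right,
      real_inner_self_eq_norm_sq, real_inner_comm b a]
    ring
  rw [expand]
  have hin : (inner ℝ a b : ℝ) ≤ ‖a‖ * ‖b‖ := real_inner_le_norm a b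
  have h1 : (α + β) * inner ℝ a b ≤ (α + β) * (‖a‖ * ‖b‖) :=
    mul_le_mul_of_nonneg_left hin (by linarith)
  have h2 : 0 ≤ (‖a‖ * α - ‖b‖ * β) * (‖a‖ - ‖b‖) := by
    rcases le_total ‖a‖ ‖b‖ with h | h
    · have hg := gsq_mono p ε hp hε (Set.mem_Ici.2 (norm_nonneg a))
        (Set.mem_Ici.2 (norm_nonneg b)) h
      simp only [← hα, ← hβ] at hg
      nlinarith [hg]
    · have hg := gsq_mono p ε hp hε (Set.mem_Ici.2 (norm_nonneg b))
        (Set.mem_Ici.2 (norm_nonneg a)) h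
      simp only [← hα, ← hβ] at hg
      nlinarith [hg]
  nlinarith [h1, h2]

private lemma key_sum {E : Type*} [NormedAddCommGroup E] [InnerProductSpace ℝ E] {N : ℕ}
    (p ε : ℝ) (hp : 1 ≤ p) (hε : 0 < ε)
    (u : Fin N → E) (b : Fin N → Fin N → ℝ)
    (hbs : ∀ i j, b i j = b j i) (hbn : ∀ i j, 0 ≤ b i j) :
    ∑ i, ∑ j, (‖u i - u j‖ ^ 2 + ε) ^ (p / 2 - 1) *
        (inner ℝ (u i - u j)
          ((∑ k, b i k • (u k - u i)) - ∑ k, b j k • (u k - u j)) : ℝ)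
      ≤ - ∑ i, ∑ j, b i j * ((‖u i - u j‖ ^ 2 + ε) ^ (p / 2 - 1) * ‖u i - u j‖ ^ 2) := by
  classical
  set c : Fin N → Fin N → ℝ := fun i j => (‖u i - u j‖ ^ 2 + ε) ^ (p / 2 - 1) with hc
  set F : Fin N → Fin N → E := fun i j => c i j • (u i - u j) with hF
  have hcs : ∀ i j, c i j = c j i := by
    intro i j; simp only [hc, norm_sub_rev (u i) (u j)]
  have hFanti : ∀ i j, F j i = - F i j := by
    intro i j
    simp only [hF, ← hcs i j]
    rw [show u j - u i = -(u i - u j) by abel, smul_neg]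
  have hM : ∀ i j k, (0:ℝ) ≤ inner ℝ (F i j - F k j) (u i - u k) := by
    intro i j k
    rw [real_inner_comm]
    have h := mono_op p ε hp hε (u i - u j) (u k - u j)
    simpa [hF, hc, sub_sub_sub_cancel_right] using h
  -- expand each term
  have expand : ∀ i j, c i j * (inner ℝ (u i - u j)
        ((∑ k, b i k • (u k - u i)) - ∑ k, b j k • (u k - u j)) : ℝ)
      = (∑ k, b i k * inner ℝ (F i j) (u k - u i))
        - ∑ k, b j k * inner ℝ (F i j) (u k - u j) := by
    intro i j
    rw [inner_sub_right, inner_sum, inner_sum, mul_sub, Finset.mul_sum, Finset.mul_sum]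
    congr 1 <;> refine Finset.sum_congr rfl fun k _ => ?_ <;>
      simp only [hF, real_inner_smul_right, real_inner_smul_left] <;> ring
  have step1 : (∑ i, ∑ j, c i j * (inner ℝ (u i - u j)
        ((∑ k, b i k • (u k - u i)) - ∑ k, b j k • (u k - u j)) : ℝ))
      = (∑ i, ∑ j, ∑ k, b i k * inner ℝ (F i j) (u k - u i))
        - ∑ i, ∑ j, ∑ k, b j k * (inner ℝ (F i j) (u k - u j) : ℝ) := by
    rw [← Finset.sum_sub_distrib]
    refine Finset.sum_congr rfl fun i _ => ?_
    rw [← Finset.sum_sub_distrib]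
    exact Finset.sum_congr rfl fun j _ => expand i j
  have hS2 : (∑ i, ∑ j, ∑ k, b j k * (inner ℝ (F i j) (u k - u j) : ℝ))
      = - ∑ i, ∑ j, ∑ k, b i k * (inner ℝ (F i j) (u k - u i) : ℝ) := by
    calc (∑ i, ∑ j, ∑ k, b j k * (inner ℝ (F i j) (u k - u j) : ℝ))
        = ∑ i, ∑ j, ∑ k, b i k * (inner ℝ (F j i) (u k - u i) : ℝ) := Finset.sum_comm
      _ = ∑ i, ∑ j, ∑ k, -(b i k * (inner ℝ (F i j) (u k - u i) : ℝ)) := by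
          refine Finset.sum_congr rfl fun i _ => Finset.sum_congr rfl fun j _ =>
            Finset.sum_congr rfl fun k _ => ?_
          rw [hFanti i j, inner_neg_left, mul_neg]
      _ = - ∑ i, ∑ j, ∑ k, b i k * (inner ℝ (F i j) (u k - u i) : ℝ) := by
          simp only [Finset.sum_neg_distrib]
  -- permutation identity for the triple sum
  have perm : ∀ g : Fin N → Fin N → Fin N → ℝ,
      (∑ i, ∑ j, ∑ k, g i j k) = ∑ i, ∑ j, ∑ k, g k j i := by
    intro g
    calc (∑ i, ∑ j, ∑ k, g i j k)
        = ∑ i, ∑ k, ∑ j, g i j k := Finset.sum_congr rfl fun i _ => Finset.sum_comm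
      _ = ∑ k, ∑ i, ∑ j, g i j k := Finset.sum_comm
      _ = ∑ k, ∑ j, ∑ i, g i j k := Finset.sum_congr rfl fun k _ => Finset.sum_comm
  have hS1 : (∑ i, ∑ j, ∑ k, b i k * (inner ℝ (F i j) (u k - u i) : ℝ))
      = ∑ i, ∑ j, ∑ k, b i k * (inner ℝ (F k j) (u i - u k) : ℝ) := by
    rw [perm (fun i j k => b i k * (inner ℝ (F i j) (u k - u i) : ℝ))]
    refine Finset.sum_congr rfl fun i _ => Finset.sum_congr rfl fun j _ =>
      Finset.sum_congr rfl fun k _ => ?_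
    rw [hbs k i]
  have combine : (∑ i, ∑ j, c i j * (inner ℝ (u i - u j)
        ((∑ k, b i k • (u k - u i)) - ∑ k, b j k • (u k - u j)) : ℝ))
      = - ∑ i, ∑ j, ∑ k, b i k * (inner ℝ (F i j - F k j) (u i - u k) : ℝ) := by
    rw [step1, hS2, sub_neg_eq_add]
    nth_rewrite 2 [hS1]
    rw [← Finset.sum_add_distrib, ← Finset.sum_neg_distrib]
    refine Finset.sum_congr rfl fun i _ => ?_
    rw [← Finset.sum_add_distrib, ← Finset.sum_neg_distrib]
    refine Finset.sum_congr rfl fun j _ => ?_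
    rw [← Finset.sum_add_distrib, ← Finset.sum_neg_distrib]
    refine Finset.sum_congr rfl fun k _ => ?_
    rw [inner_sub_left, show u k - u i = -(u i - u k) by abel, inner_neg_right]
    ring
  rw [combine, neg_le_neg_iff]
  refine Finset.sum_le_sum fun i _ => Finset.sum_le_sum fun j _ => ?_
  have single : b i j * (inner ℝ (F i j - F j j) (u i - u j) : ℝ)
      ≤ ∑ k, b i k * (inner ℝ (F i j - F k j) (u i - u k) : ℝ) :=
    Finset.single_le_sum (fun k _ => mul_nonneg (hbn i k) (hM i j k))
      (Finset.mem_univ j)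
  have hFjj : F j j = 0 := by simp [hF]
  rw [hFjj, sub_zero, hF] at single
  simp only [real_inner_smul_left, real_inner_self_eq_norm_sq] at single
  exact single

private lemma hasDerivAt_eps {E : Type*} [NormedAddCommGroup E] [InnerProductSpace ℝ E]
    (p ε : ℝ) (hε : 0 < ε) (w : ℝ → E) (w' : E) (t : ℝ) (hw : HasDerivAt w w' t) :
    HasDerivAt (fun τ => (‖w τ‖ ^ 2 + ε) ^ (p / 2))
      (p * ((‖w t‖ ^ 2 + ε) ^ (p / 2 - 1) * (inner ℝ (w t) w' : ℝ))) t := by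
  have h1 : HasDerivAt (fun τ => (inner ℝ (w τ) (w τ) : ℝ))
      ((inner ℝ (w t) w' : ℝ) + inner ℝ w' (w t)) t := hw.inner ℝ hw
  have h2 : HasDerivAt (fun τ => ‖w τ‖ ^ 2 + ε) (2 * (inner ℝ (w t) w' : ℝ)) t := by
    have : (fun τ => ‖w τ‖ ^ 2 + ε) = fun τ => (inner ℝ (w τ) (w τ) : ℝ) + ε := by
      funext τ; rw [real_inner_self_eq_norm_sq]
    rw [this]
    exact (h1.add_const ε).congr_deriv (by rw [real_inner_comm w' (w t)]; ring)
  have hne : ‖w t‖ ^ 2 + ε ≠ 0 := by positivity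
  have h3 := h2.rpow_const (p := p / 2) (Or.inl hne)
  convert h3 using 1
  ring

private lemma sq_rpow_helper (p r : ℝ) (hr : 0 ≤ r) : (r ^ 2) ^ (p / 2) = r ^ p := by
  rw [← Real.rpow_natCast r 2, ← Real.rpow_mul hr]
  norm_num
  ring_nf

set_option maxHeartbeats 2000000 in
/-- **Monotonicity of the variations `V_p` (eq. (2.1) of the paper).**
For a continuous nonneg kernel, along any solution of the Cucker–Smale system
on `[0,T]`, for every `p ≥ 1` the variation
`V_p(t) = N⁻² ∑_{i,j} |v_i − v_j|^p` is non-increasing and satisfies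
`V_p(t) ≤ V_p(s) − (1/N) ∫ₛᵗ I_p(τ) dτ`, where
`I_p = p N⁻² ∑_{i,j} |v_i − v_j|^p φ(|x_i − x_j|)`. -/
theorem cucker_smale_Vp_monotone
    (d N : ℕ) (hN : 1 ≤ N) (φ : ℝ → ℝ)
    (hφcont : ContinuousOn φ (Set.Ici 0))
    (hφnn : ∀ r : ℝ, 0 ≤ r → 0 ≤ φ r)
    (T : ℝ) (hT : 0 ≤ T)
    (x v : Fin N → ℝ → EuclideanSpace ℝ (Fin d))
    (hx : ∀ i, ∀ t ∈ Set.Icc 0 T, HasDerivAt (x i) (v i t) t)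
    (hv : ∀ i, ∀ t ∈ Set.Icc 0 T, HasDerivAt (v i)
        ((N : ℝ)⁻¹ • ∑ j, φ (‖x i t - x j t‖) • (v j t - v i t)) t) :
    ∀ p : ℝ, 1 ≤ p →
      AntitoneOn (fun t => ((N : ℝ))⁻¹ ^ 2 * ∑ i, ∑ j, ‖v i t - v j t‖ ^ p)
        (Set.Icc 0 T) ∧
      ∀ s t : ℝ, 0 ≤ s → s ≤ t → t ≤ T →
        ((N : ℝ))⁻¹ ^ 2 * ∑ i, ∑ j, ‖v i t - v j t‖ ^ p
          ≤ ((N : ℝ))⁻¹ ^ 2 * ∑ i, ∑ j, ‖v i s - v j s‖ ^ p -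
            (N : ℝ)⁻¹ * ∫ τ in s..t,
              p * ((N : ℝ))⁻¹ ^ 2 * ∑ i, ∑ j,
                ‖v i τ - v j τ‖ ^ p * φ (‖x i τ - x j τ‖) := by
  intro p hp
  have hNpos : (0:ℝ) < N := by exact_mod_cast Nat.lt_of_lt_of_le Nat.zero_lt_one hN
  have hppos : (0:ℝ) < p := by linarith
  have hvcont : ∀ i, ContinuousOn (v i) (Set.Icc 0 T) :=
    fun i t ht => (hv i t ht).continuousAt.continuousWithinAt
  have hxcont : ∀ i, ContinuousOn (x i) (Set.Icc 0 T) :=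
    fun i t ht => (hx i t ht).continuousAt.continuousWithinAt
  have hφcomp : ∀ i j, ContinuousOn (fun τ => φ (‖x i τ - x j τ‖)) (Set.Icc 0 T) :=
    fun i j => hφcont.comp (((hxcont i).sub (hxcont j)).norm) (fun τ _ => norm_nonneg _)
  -- a uniform bound on the kernel values along the trajectories
  obtain ⟨C, hC0, hCb⟩ : ∃ C, 0 ≤ C ∧
      ∀ τ ∈ Set.Icc 0 T, ∀ i j : Fin N, φ (‖x i τ - x j τ‖) ≤ C := by
    have hG : ContinuousOn (fun τ => ∑ i, ∑ j, φ (‖x i τ - x j τ‖)) (Set.Icc 0 T) := by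
      apply continuousOn_finset_sum; intro i _
      apply continuousOn_finset_sum; intro j _
      exact hφcomp i j
    obtain ⟨C, hC⟩ := (isCompact_Icc).exists_bound_of_continuousOn hG
    refine ⟨max C 0, le_max_right _ _, fun τ hτ i j => ?_⟩
    have hterm : ∀ i' j' : Fin N, 0 ≤ φ (‖x i' τ - x j' τ‖) :=
      fun i' j' => hφnn _ (norm_nonneg _)
    have h1 : φ (‖x i τ - x j τ‖) ≤ ∑ j', φ (‖x i τ - x j' τ‖) :=
      Finset.single_le_sum (fun j' _ => hterm i j') (Finset.mem_univ j)
    have h2 : (∑ j', φ (‖x i τ - x j' τ‖)) ≤ ∑ i', ∑ j', φ (‖x i' τ - x j' τ‖) :=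
      Finset.single_le_sum
        (fun i' _ => Finset.sum_nonneg fun j' _ => hterm i' j') (Finset.mem_univ i)
    have h3 := hC τ hτ
    rw [Real.norm_eq_abs] at h3
    calc φ (‖x i τ - x j τ‖) ≤ ∑ i', ∑ j', φ (‖x i' τ - x j' τ‖) := le_trans h1 h2
      _ ≤ |∑ i', ∑ j', φ (‖x i' τ - x j' τ‖)| := le_abs_self _
      _ ≤ C := h3
      _ ≤ max C 0 := le_max_left _ _
  set I : ℝ → ℝ := fun τ =>
    p * ((N : ℝ))⁻¹ ^ 2 * ∑ i, ∑ j, ‖v i τ - v j τ‖ ^ p * φ (‖x i τ - x j τ‖) with hI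
  have hIcont : ContinuousOn I (Set.Icc 0 T) := by
    apply continuousOn_const.mul
    apply continuousOn_finset_sum; intro i _
    apply continuousOn_finset_sum; intro j _
    exact ((((hvcont i).sub (hvcont j)).norm).rpow_const
      (fun τ _ => Or.inr (by linarith))).mul (hφcomp i j)
  have hInonneg : ∀ τ ∈ Set.Icc 0 T, 0 ≤ I τ := by
    intro τ hτ
    apply mul_nonneg (by positivity)
    apply Finset.sum_nonneg; intro i _
    apply Finset.sum_nonneg; intro j _
    exact mul_nonneg (Real.rpow_nonneg (norm_nonneg _) p) (hφnn _ (norm_nonneg _))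
  have key : ∀ s t : ℝ, 0 ≤ s → s ≤ t → t ≤ T →
      ((N : ℝ))⁻¹ ^ 2 * ∑ i, ∑ j, ‖v i t - v j t‖ ^ p
        ≤ ((N : ℝ))⁻¹ ^ 2 * ∑ i, ∑ j, ‖v i s - v j s‖ ^ p
          - (N : ℝ)⁻¹ * ∫ τ in s..t, I τ := by
    intro s t hs hst htT
    have hsIcc : Set.Icc s t ⊆ Set.Icc 0 T := Set.Icc_subset_Icc hs htT
    have hsmem : s ∈ Set.Icc (0:ℝ) T := ⟨hs, le_trans hst htT⟩
    have htmem : t ∈ Set.Icc (0:ℝ) T := ⟨le_trans hs hst, htT⟩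
    have hMain : ∀ ε : ℝ, 0 < ε →
        ((N : ℝ))⁻¹ ^ 2 * ∑ i, ∑ j, ‖v i t - v j t‖ ^ p
          ≤ (((N : ℝ))⁻¹ ^ 2 * ∑ i, ∑ j, (‖v i s - v j s‖ ^ 2 + ε) ^ (p / 2)
              + p * (N : ℝ)⁻¹ * C * ε ^ (p / 2) * (t - s))
            - (N : ℝ)⁻¹ * ∫ τ in s..t, I τ := by
      intro ε hε
      set fε : ℝ → ℝ := fun σ =>
        ((N : ℝ))⁻¹ ^ 2 * ∑ i, ∑ j, (‖v i σ - v j σ‖ ^ 2 + ε) ^ (p / 2) with hfε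
      set δ : ℝ := p * (N : ℝ)⁻¹ * C * ε ^ (p / 2) with hδ
      have hδ0 : 0 ≤ δ := by rw [hδ]; positivity
      -- derivative of the regularized functional
      have hderiv : ∀ τ ∈ Set.Icc 0 T, HasDerivAt fε
          (((N : ℝ))⁻¹ ^ 2 * ∑ i, ∑ j, p * ((‖v i τ - v j τ‖ ^ 2 + ε) ^ (p / 2 - 1) *
            (inner ℝ (v i τ - v j τ)
              (((N : ℝ)⁻¹ • ∑ k, φ (‖x i τ - x k τ‖) • (v k τ - v i τ))
                - (N : ℝ)⁻¹ • ∑ k, φ (‖x j τ - x k τ‖) • (v k τ - v j τ)) : ℝ))) τ := by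
        intro τ hτ
        rw [hfε]
        apply HasDerivAt.const_mul
        apply HasDerivAt.fun_sum; intro i _
        apply HasDerivAt.fun_sum; intro j _
        exact hasDerivAt_eps p ε hε _ _ τ ((hv i τ hτ).sub (hv j τ hτ))
      -- pointwise derivative bound
      have hDle : ∀ τ ∈ Set.Icc 0 T,
          ((N : ℝ))⁻¹ ^ 2 * ∑ i, ∑ j, p * ((‖v i τ - v j τ‖ ^ 2 + ε) ^ (p / 2 - 1) *
            (inner ℝ (v i τ - v j τ)
              (((N : ℝ)⁻¹ • ∑ k, φ (‖x i τ - x k τ‖) • (v k τ - v i τ))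
                - (N : ℝ)⁻¹ • ∑ k, φ (‖x j τ - x k τ‖) • (v k τ - v j τ)) : ℝ))
            ≤ -((N : ℝ)⁻¹ * I τ) + δ := by
        intro τ hτ
        have hbs : ∀ i j : Fin N, φ (‖x i τ - x j τ‖) = φ (‖x j τ - x i τ‖) := by
          intro i j; rw [norm_sub_rev]
        have hbn : ∀ i j : Fin N, 0 ≤ φ (‖x i τ - x j τ‖) :=
          fun i j => hφnn _ (norm_nonneg _)
        have hks := key_sum p ε hp hε (fun i => v i τ)
          (fun i j => φ (‖x i τ - x j τ‖)) hbs hbn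
        -- pull out the 1/N of the velocity equation
        have e2 : (∑ i, ∑ j, p * ((‖v i τ - v j τ‖ ^ 2 + ε) ^ (p / 2 - 1) *
              (inner ℝ (v i τ - v j τ)
                (((N : ℝ)⁻¹ • ∑ k, φ (‖x i τ - x k τ‖) • (v k τ - v i τ))
                  - (N : ℝ)⁻¹ • ∑ k, φ (‖x j τ - x k τ‖) • (v k τ - v j τ)) : ℝ)))
            = p * (N : ℝ)⁻¹ * ∑ i, ∑ j, (‖v i τ - v j τ‖ ^ 2 + ε) ^ (p / 2 - 1) *
              (inner ℝ (v i τ - v j τ)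
                ((∑ k, φ (‖x i τ - x k τ‖) • (v k τ - v i τ))
                  - ∑ k, φ (‖x j τ - x k τ‖) • (v k τ - v j τ)) : ℝ) := by
          rw [Finset.mul_sum]
          refine Finset.sum_congr rfl fun i _ => ?_
          rw [Finset.mul_sum]
          refine Finset.sum_congr rfl fun j _ => ?_
          rw [← smul_sub, real_inner_smul_right]
          ring
        -- per-term lower bound for the dissipation
        have hlow : ∀ i j : Fin N,
            ‖v i τ - v j τ‖ ^ p * φ (‖x i τ - x j τ‖)
              - ε ^ (p / 2) * φ (‖x i τ - x j τ‖)
            ≤ φ (‖x i τ - x j τ‖) * ((‖v i τ - v j τ‖ ^ 2 + ε) ^ (p / 2 - 1)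
                * ‖v i τ - v j τ‖ ^ 2) := by
          intro i j
          have hl := low_bound p ε hp hε ‖v i τ - v j τ‖ (norm_nonneg _)
          nlinarith [hbn i j, mul_le_mul_of_nonneg_left hl (hbn i j)]
        have h4 : (∑ i, ∑ j, (‖v i τ - v j τ‖ ^ p * φ (‖x i τ - x j τ‖)
              - ε ^ (p / 2) * φ (‖x i τ - x j τ‖)))
            ≤ ∑ i, ∑ j, φ (‖x i τ - x j τ‖) *
                ((‖v i τ - v j τ‖ ^ 2 + ε) ^ (p / 2 - 1) * ‖v i τ - v j τ‖ ^ 2) :=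
          Finset.sum_le_sum fun i _ => Finset.sum_le_sum fun j _ => hlow i j
        have h5 : (∑ i, ∑ j, (‖v i τ - v j τ‖ ^ p * φ (‖x i τ - x j τ‖)
              - ε ^ (p / 2) * φ (‖x i τ - x j τ‖)))
            = (∑ i, ∑ j, ‖v i τ - v j τ‖ ^ p * φ (‖x i τ - x j τ‖))
              - ε ^ (p / 2) * ∑ i, ∑ j, φ (‖x i τ - x j τ‖) := by
          rw [Finset.mul_sum, ← Finset.sum_sub_distrib]
          refine Finset.sum_congr rfl fun i _ => ?_
          rw [Finset.mul_sum, ← Finset.sum_sub_distrib]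
        have hSb : (∑ i, ∑ j, φ (‖x i τ - x j τ‖)) ≤ (N : ℝ) ^ 2 * C := by
          calc (∑ i, ∑ j, φ (‖x i τ - x j τ‖)) ≤ ∑ _i : Fin N, ∑ _j : Fin N, C :=
              Finset.sum_le_sum fun i _ => Finset.sum_le_sum fun j _ => hCb τ hτ i j
            _ = (N : ℝ) ^ 2 * C := by
              simp [Finset.sum_const, Finset.card_univ]; ring
        have hSbnn : 0 ≤ ∑ i, ∑ j, φ (‖x i τ - x j τ‖) :=
          Finset.sum_nonneg fun i _ => Finset.sum_nonneg fun j _ => hbn i j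
        -- combine
        rw [e2, mul_comm (((N : ℝ))⁻¹ ^ 2)]
        have hc1 : 0 ≤ p * (N : ℝ)⁻¹ := by positivity
        have hQR := mul_le_mul_of_nonneg_left hks hc1
        have hstep : p * (N : ℝ)⁻¹ *
            (-(∑ i, ∑ j, φ (‖x i τ - x j τ‖) *
              ((‖v i τ - v j τ‖ ^ 2 + ε) ^ (p / 2 - 1) * ‖v i τ - v j τ‖ ^ 2)))
            ≤ p * (N : ℝ)⁻¹ *
              (-((∑ i, ∑ j, ‖v i τ - v j τ‖ ^ p * φ (‖x i τ - x j τ‖))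
                - ε ^ (p / 2) * ((N : ℝ) ^ 2 * C))) := by
          apply mul_le_mul_of_nonneg_left _ hc1
          have := h4
          rw [h5] at this
          have hεp : (0:ℝ) ≤ ε ^ (p / 2) := Real.rpow_nonneg hε.le _
          nlinarith [mul_le_mul_of_nonneg_left hSb hεp]
        have hN2 : ((N : ℝ))⁻¹ ^ 2 * (N : ℝ) ^ 2 = 1 := by
          field_simp
        rw [hI]
        simp only
        nlinarith [mul_le_mul_of_nonneg_right (le_trans hQR hstep)
            (by positivity : (0:ℝ) ≤ ((N : ℝ))⁻¹ ^ 2)]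
      -- the auxiliary decreasing function
      set g : ℝ → ℝ := fun σ => fε σ + (N : ℝ)⁻¹ * (∫ u in s..σ, I u) - δ * σ with hg
      have hfεcont : ContinuousOn fε (Set.Icc s t) :=
        fun τ hτ => ((hderiv τ (hsIcc hτ)).continuousAt).continuousWithinAt
      have hIintOn : IntegrableOn I (Set.uIcc s t) volume := by
        rw [Set.uIcc_of_le hst]
        exact (hIcont.mono hsIcc).integrableOn_Icc
      have hprim : ContinuousOn (fun σ => ∫ u in s..σ, I u) (Set.Icc s t) := by
        have := intervalIntegral.continuousOn_primitive_interval (a := s) (b := t)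
          (μ := volume) (f := I) hIintOn
        rwa [Set.uIcc_of_le hst] at this
      have hgd : ∀ τ ∈ Set.Ioo s t, HasDerivAt g
          ((((N : ℝ))⁻¹ ^ 2 * ∑ i, ∑ j, p * ((‖v i τ - v j τ‖ ^ 2 + ε) ^ (p / 2 - 1) *
            (inner ℝ (v i τ - v j τ)
              (((N : ℝ)⁻¹ • ∑ k, φ (‖x i τ - x k τ‖) • (v k τ - v i τ))
                - (N : ℝ)⁻¹ • ∑ k, φ (‖x j τ - x k τ‖) • (v k τ - v j τ)) : ℝ)))
            + (N : ℝ)⁻¹ * I τ - δ) τ := by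
        intro τ hτ
        have hτ' : τ ∈ Set.Icc 0 T := hsIcc (Set.Ioo_subset_Icc_self hτ)
        have h0τ : 0 < τ := lt_of_le_of_lt hs hτ.1
        have hτT : τ < T := lt_of_lt_of_le hτ.2 htT
        have h1 := hderiv τ hτ'
        have h2 : HasDerivAt (fun σ => ∫ u in s..σ, I u) (I τ) τ := by
          apply intervalIntegral.integral_hasDerivAt_right
          · apply ContinuousOn.intervalIntegrable
            apply hIcont.mono
            rw [Set.uIcc_of_le hτ.1.le]
            exact Set.Icc_subset_Icc hs (le_trans hτ.2.le htT)
          · exact (ContinuousOn.stronglyMeasurableAtFilter isOpen_Ioo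
              (hIcont.mono Set.Ioo_subset_Icc_self)) τ ⟨h0τ, hτT⟩
          · exact hIcont.continuousAt (Icc_mem_nhds h0τ hτT)
        have h3 : HasDerivAt (fun σ => δ * σ) δ τ := by
          simpa using (hasDerivAt_id τ).const_mul δ
        exact (h1.add (h2.const_mul ((N : ℝ)⁻¹))).sub h3
      have hganti : AntitoneOn g (Set.Icc s t) := by
        apply antitoneOn_of_deriv_nonpos (convex_Icc s t)
        · exact (hfεcont.add (continuousOn_const.mul hprim)).sub
            ((continuous_const.mul continuous_id).continuousOn)
        · intro τ hτ
          rw [interior_Icc] at hτ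
          exact ((hgd τ hτ).differentiableAt).differentiableWithinAt
        · intro τ hτ
          rw [interior_Icc] at hτ
          rw [(hgd τ hτ).deriv]
          have := hDle τ (hsIcc (Set.Ioo_subset_Icc_self hτ))
          linarith
      have hgle : g t ≤ g s :=
        hganti (Set.left_mem_Icc.2 hst) (Set.right_mem_Icc.2 hst) hst
      -- V_p(t) ≤ fε(t)
      have hVfε : ((N : ℝ))⁻¹ ^ 2 * ∑ i, ∑ j, ‖v i t - v j t‖ ^ p ≤ fε t := by
        rw [hfε]
        apply mul_le_mul_of_nonneg_left _ (by positivity)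
        apply Finset.sum_le_sum; intro i _
        apply Finset.sum_le_sum; intro j _
        rw [← sq_rpow_helper p _ (norm_nonneg _)]
        exact Real.rpow_le_rpow (by positivity) (by linarith) (by positivity)
      rw [hg] at hgle
      simp only [intervalIntegral.integral_same] at hgle
      have hfεs : fε s = ((N : ℝ))⁻¹ ^ 2 * ∑ i, ∑ j, (‖v i s - v j s‖ ^ 2 + ε) ^ (p / 2) := by
        rw [hfε]
      linarith [hgle, hVfε, hfεs]
    -- pass to the limit ε → 0⁺
    have hTendA : Tendsto (fun ε : ℝ =>
        ((N : ℝ))⁻¹ ^ 2 * ∑ i, ∑ j, (‖v i s - v j s‖ ^ 2 + ε) ^ (p / 2)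
          + p * (N : ℝ)⁻¹ * C * ε ^ (p / 2) * (t - s)) (nhdsWithin 0 (Set.Ioi 0))
        (nhds (((N : ℝ))⁻¹ ^ 2 * ∑ i, ∑ j, ‖v i s - v j s‖ ^ p + 0)) := by
      apply Tendsto.mono_left _ nhdsWithin_le_nhds
      apply Tendsto.add
      · apply Tendsto.const_mul
        apply tendsto_finset_sum; intro i _
        apply tendsto_finset_sum; intro j _
        have hca : ContinuousAt (fun ε : ℝ => (‖v i s - v j s‖ ^ 2 + ε) ^ (p / 2)) 0 := by
          apply ContinuousAt.rpow_const
          · exact (continuous_const.add continuous_id).continuousAt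
          · right; positivity
        have h0 := hca.tendsto
        simp only [add_zero] at h0
        rwa [sq_rpow_helper p _ (norm_nonneg _)] at h0
      · have hca : ContinuousAt (fun ε : ℝ => p * (N : ℝ)⁻¹ * C * ε ^ (p / 2) * (t - s)) 0 := by
          apply ContinuousAt.mul _ continuousAt_const
          apply ContinuousAt.mul continuousAt_const
          exact continuousAt_id.rpow_const (Or.inr (by positivity))
        have h0 := hca.tendsto
        simp only [Real.zero_rpow (by positivity : p / 2 ≠ 0), mul_zero, zero_mul] at h0
        exact h0
    have hev : ∀ᶠ ε in nhdsWithin (0:ℝ) (Set.Ioi 0),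
        ((N : ℝ))⁻¹ ^ 2 * (∑ i, ∑ j, ‖v i t - v j t‖ ^ p)
          + (N : ℝ)⁻¹ * ∫ τ in s..t, I τ
          ≤ ((N : ℝ))⁻¹ ^ 2 * ∑ i, ∑ j, (‖v i s - v j s‖ ^ 2 + ε) ^ (p / 2)
            + p * (N : ℝ)⁻¹ * C * ε ^ (p / 2) * (t - s) := by
      apply eventually_nhdsWithin_of_forall
      intro ε hε
      have := hMain ε hε
      linarith
    have := ge_of_tendsto hTendA hev
    linarith
  refine ⟨?_, key⟩
  intro s hsmem t htmem hst
  have h := key s t hsmem.1 hst htmem.2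
  have hnn : 0 ≤ ∫ τ in s..t, I τ :=
    intervalIntegral.integral_nonneg hst
      (fun τ hτ => hInonneg τ (Set.Icc_subset_Icc hsmem.1 htmem.2 hτ))
  simp only at h ⊢
  nlinarith [mul_nonneg (inv_nonneg.2 hNpos.le) hnn]
end

section
/- Fix β > 1 and consider the reduced two-agent system: differentiable functions x, v : [0,∞) → ℝ with x(t) > 0 for all t, satisfying ẋ = v and v̇ = −v/(2^β x^β). Then the quantity K = v(t) − x(t)^{1−β}/((β−1) 2^β) is conserved in time, and if initially v(0) − x(0)^{1−β}/((β−1) 2^β) = K > 0, then v(t) ≥ K > 0 for all t ≥ 0; in particular the two agents never align. -/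
open Filter

/-- **Permanent misalignment for fat-tail-violating kernels (Introduction).**
For the reduced two-agent system `ẋ = v`, `v̇ = −v/(2^β x^β)` with `β > 1` and
`x > 0`, the quantity `K = v + x^{1−β}/((β−1)2^β)` (equivalently
`v − x^{1−β}/((1−β)2^β)`) is conserved, and if `K > 0` initially then
`v(t) ≥ K > 0` for all `t ≥ 0`: the two agents never align. -/
theorem two_agent_misalignment
    (β : ℝ) (hβ : 1 < β)
    (x v : ℝ → ℝ)
    (hxpos : ∀ t : ℝ, 0 ≤ t → 0 < x t)
    (hx : ∀ t : ℝ, 0 ≤ t → HasDerivAt x (v t) t)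
    (hv : ∀ t : ℝ, 0 ≤ t → HasDerivAt v (-(v t) / (2 ^ β * x t ^ β)) t)
    (K : ℝ) (hK : v 0 - x 0 ^ (1 - β) / ((β - 1) * 2 ^ β) = K) :
    (∀ t : ℝ, 0 ≤ t → v t - x t ^ (1 - β) / ((β - 1) * 2 ^ β) = K) ∧
    (0 < K → ∀ t : ℝ, 0 ≤ t → K ≤ v t) := by
  set E : ℝ → ℝ := fun t => v t - x t ^ (1 - β) / ((β - 1) * 2 ^ β) with hE
  have h2β : (0:ℝ) < 2 ^ β := Real.rpow_pos_of_pos (by norm_num) β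
  have hβ1 : β - 1 ≠ 0 := by linarith
  have hEderiv : ∀ t : ℝ, 0 ≤ t → HasDerivAt E 0 t := by
    intro t ht
    have hxt := hxpos t ht
    have hxβ : (0:ℝ) < x t ^ β := Real.rpow_pos_of_pos hxt β
    have h1 : HasDerivAt (fun s => x s ^ (1 - β))
        (v t * (1 - β) * x t ^ (1 - β - 1)) t :=
      (hx t ht).rpow_const (Or.inl hxt.ne')
    have h2 : HasDerivAt E
        (-(v t) / (2 ^ β * x t ^ β) -
          (v t * (1 - β) * x t ^ (1 - β - 1)) / ((β - 1) * 2 ^ β)) t :=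
      (hv t ht).sub (h1.div_const _)
    convert h2 using 1
    have hneg : x t ^ (1 - β - 1) = (x t ^ β)⁻¹ := by
      rw [show (1 - β - 1 : ℝ) = -β by ring, Real.rpow_neg hxt.le]
    rw [hneg]
    field_simp
    ring
  have hconst : ∀ t : ℝ, 0 ≤ t → E t = E 0 := by
    intro t ht
    have hcont : ContinuousOn E (Set.Icc 0 t) := fun s hs =>
      ((hEderiv s hs.1).continuousAt).continuousWithinAt
    have hder : ∀ s ∈ Set.Ico (0:ℝ) t, HasDerivWithinAt E 0 (Set.Ici s) s :=
      fun s hs => (hEderiv s hs.1).hasDerivWithinAt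
    exact constant_of_has_deriv_right_zero hcont hder t (Set.right_mem_Icc.mpr ht)
  have hE0 : E 0 = K := hK
  constructor
  · intro t ht; rw [← hE0]; exact hconst t ht
  · intro hKpos t ht
    have hEt : E t = K := (hconst t ht).trans hE0
    have hx1β : (0:ℝ) < x t ^ (1 - β) := Real.rpow_pos_of_pos (hxpos t ht) _
    have : (0:ℝ) ≤ x t ^ (1 - β) / ((β - 1) * 2 ^ β) :=
      le_of_lt (div_pos hx1β (mul_pos (by linarith) h2β))
    simp only [hE] at hEt
    linarith
end

section
/- Fix 0 < β < 1 and consider the reduced two-agent system: differentiable functions x, v : [0,T) → ℝ with x(t) > 0, satisfying ẋ = v and v̇ = −v/(2^β x^β). Then the quantity K = v(t) + x(t)^{1−β}/((1−β) 2^β) is conserved, and if K < 0 then v(t) ≤ K < 0 for all t, so x(t) ≤ x(0) + K t; consequently the solution cannot be extended with x > 0 beyond time x(0)/|K|, i.e., the two agents collide in finite time. -/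
open Filter

/-- **Finite-time collision for weakly singular kernels (Example 2.2).**
For the reduced two-agent system `ẋ = v`, `v̇ = −v/(2^β x^β)` with `0 < β < 1`
and `x > 0` on `[0,T)`, the quantity `K = v + x^{1−β}/((1−β)2^β)` is
conserved; if `K < 0` then `v(t) ≤ K < 0` and `x(t) ≤ x(0) + K t` on `[0,T)`,
so the solution cannot be extended with `x > 0` beyond time `x(0)/|K|`:
the agents collide in finite time. -/
theorem two_agent_finite_time_collision
    (β : ℝ) (hβ0 : 0 < β) (hβ1 : β < 1)
    (T : ℝ) (hT : 0 < T)
    (x v : ℝ → ℝ)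
    (hxpos : ∀ t ∈ Set.Ico (0:ℝ) T, 0 < x t)
    (hx : ∀ t ∈ Set.Ico (0:ℝ) T, HasDerivAt x (v t) t)
    (hv : ∀ t ∈ Set.Ico (0:ℝ) T, HasDerivAt v (-(v t) / (2 ^ β * x t ^ β)) t)
    (K : ℝ) (hK : v 0 + x 0 ^ (1 - β) / ((1 - β) * 2 ^ β) = K) :
    (∀ t ∈ Set.Ico (0:ℝ) T, v t + x t ^ (1 - β) / ((1 - β) * 2 ^ β) = K) ∧
    (K < 0 →
      (∀ t ∈ Set.Ico (0:ℝ) T, v t ≤ K) ∧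
      (∀ t ∈ Set.Ico (0:ℝ) T, x t ≤ x 0 + K * t) ∧
      T ≤ x 0 / |K|) := by
  have h2β : (0:ℝ) < 2 ^ β := Real.rpow_pos_of_pos two_pos β
  have h1β : (0:ℝ) < 1 - β := by linarith
  set E : ℝ → ℝ := fun t => v t + x t ^ (1 - β) / ((1 - β) * 2 ^ β) with hE
  have hconv : Convex ℝ (Set.Ico (0:ℝ) T) := convex_Ico 0 T
  have hint : interior (Set.Ico (0:ℝ) T) = Set.Ioo 0 T := interior_Ico
  have hEderiv : ∀ t ∈ Set.Ico (0:ℝ) T, HasDerivAt E 0 t := by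
    intro t ht
    have hxt := hxpos t ht
    have hxβ : (0:ℝ) < x t ^ β := Real.rpow_pos_of_pos hxt β
    have h1 : HasDerivAt (fun y => x y ^ (1 - β))
        (v t * (1 - β) * x t ^ (1 - β - 1)) t :=
      (hx t ht).rpow_const (Or.inl hxt.ne')
    have h2 := (hv t ht).add (h1.div_const ((1 - β) * 2 ^ β))
    refine h2.congr_deriv ?_
    have hneg : x t ^ (1 - β - 1) = (x t ^ β)⁻¹ := by
      rw [show (1 - β - 1 : ℝ) = -β by ring, Real.rpow_neg hxt.le]
    rw [hneg]
    field_simp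
    ring
  have hEcont : ContinuousOn E (Set.Ico (0:ℝ) T) := fun t ht =>
    (hEderiv t ht).continuousAt.continuousWithinAt
  have hEconst : ∀ t ∈ Set.Ico (0:ℝ) T, E t = E 0 := by
    have hder : ∀ t ∈ interior (Set.Ico (0:ℝ) T),
        HasDerivWithinAt E ((fun _ => (0:ℝ)) t) (interior (Set.Ico (0:ℝ) T)) t := by
      intro t ht
      rw [hint] at ht
      exact (hEderiv t ⟨ht.1.le, ht.2⟩).hasDerivWithinAt
    have hanti := antitoneOn_of_hasDerivWithinAt_nonpos hconv hEcont hder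
      (fun _ _ => le_refl 0)
    have hmono := monotoneOn_of_hasDerivWithinAt_nonneg hconv hEcont hder
      (fun _ _ => le_refl 0)
    intro t ht
    have h0 : (0:ℝ) ∈ Set.Ico (0:ℝ) T := ⟨le_refl 0, hT⟩
    exact le_antisymm (hanti h0 ht ht.1) (hmono h0 ht ht.1)
  have hcons : ∀ t ∈ Set.Ico (0:ℝ) T, v t + x t ^ (1 - β) / ((1 - β) * 2 ^ β) = K := by
    intro t ht
    have := hEconst t ht
    simp only [hE] at this
    rw [this, hK]
  refine ⟨hcons, fun hKneg => ?_⟩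
  have hvle : ∀ t ∈ Set.Ico (0:ℝ) T, v t ≤ K := by
    intro t ht
    have h := hcons t ht
    have hpos : 0 ≤ x t ^ (1 - β) / ((1 - β) * 2 ^ β) :=
      div_nonneg (Real.rpow_nonneg (hxpos t ht).le _) (by positivity)
    linarith
  have hxle : ∀ t ∈ Set.Ico (0:ℝ) T, x t ≤ x 0 + K * t := by
    have hanti : AntitoneOn (fun t => x t - K * t) (Set.Ico (0:ℝ) T) := by
      apply antitoneOn_of_hasDerivWithinAt_nonpos hconv
        (f' := fun t => v t - K)
      · intro t ht
        exact ((hx t ht).sub ((hasDerivAt_id t).const_mul K)).continuousAt.continuousWithinAt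
      · intro t ht
        rw [hint] at ht
        have := (hx t ⟨ht.1.le, ht.2⟩).sub ((hasDerivAt_id t).const_mul K)
        exact this.hasDerivWithinAt.congr_deriv (by ring)
      · intro t ht
        rw [hint] at ht
        have := hvle t ⟨ht.1.le, ht.2⟩
        linarith
    intro t ht
    have h0 : (0:ℝ) ∈ Set.Ico (0:ℝ) T := ⟨le_refl 0, hT⟩
    have := hanti h0 ht ht.1
    simp only [mul_zero, sub_zero] at this
    linarith
  refine ⟨hvle, hxle, ?_⟩
  by_contra hTle
  push_neg at hTle
  have hx0 : 0 < x 0 := hxpos 0 ⟨le_refl 0, hT⟩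
  have hKabs : |K| = -K := abs_of_neg hKneg
  rw [hKabs] at hTle
  set t0 : ℝ := x 0 / (-K) with ht0
  have ht0pos : 0 < t0 := div_pos hx0 (by linarith)
  have ht0T : t0 < T := hTle
  have ht0mem : t0 ∈ Set.Ico (0:ℝ) T := ⟨ht0pos.le, ht0T⟩
  have h1 := hxpos t0 ht0mem
  have h2 := hxle t0 ht0mem
  have h3 : K * t0 = -x 0 := by
    rw [ht0]
    field_simp [hKneg.ne]
  linarith
end
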